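/- arXiv:2312.13900 — 5 statements merged into one kernel-verified Lean document; each statement's English description precedes it below -/
import Mathlib

section
/- Let γ ∈ (0, √2). For real α < −γ/2 the integral H(α) := ∫_{0}^{1} ∫_{0}^{1} x₁^{−γα/2 − 1} x₂^{−γα/2 − 1} |x₁ − x₂|^{−γ²/2} dx₁ dx₂ converges absolutely. Then lim_{α ↗ −γ/2} (α + γ/2)·H(α) = −(2/γ) · Γ(γ²/4) Γ(1 − γ²/2) / Γ(1 − γ²/4). -/
open MeasureTheory Set

lemma beta_aux {a b x : ℝ} (hx0 : (0:ℝ) ≤ x) (hx1' : x ≤ 1) :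
    ((x:ℂ) ^ ((a:ℂ)-1) * ((1:ℂ)-(x:ℂ)) ^ ((b:ℂ)-1)) = ((x ^ (a-1) * (1-x) ^ (b-1) : ℝ) : ℂ) := by
  have hx1 : (0:ℝ) ≤ 1 - x := by linarith
  rw [show ((a:ℂ) - 1) = ((a - 1 : ℝ) : ℂ) by push_cast; ring,
      show ((b:ℂ) - 1) = ((b - 1 : ℝ) : ℂ) by push_cast; ring,
      show ((1:ℂ) - (x:ℂ)) = ((1 - x : ℝ) : ℂ) by push_cast; ring,
      ← Complex.ofReal_cpow hx0, ← Complex.ofReal_cpow hx1, ← Complex.ofReal_mul]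

lemma beta_intble {a b : ℝ} (ha : 0 < a) (hb : 0 < b) :
    IntegrableOn (fun t : ℝ => t ^ (a-1) * (1-t) ^ (b-1)) (Ioo 0 1) volume := by
  have h := Complex.betaIntegral_convergent (u := (a:ℂ)) (v := (b:ℂ)) (by simpa) (by simpa)
  rw [intervalIntegrable_iff_integrableOn_Ioo_of_le zero_le_one] at h
  refine h.re.congr ?_
  refine (ae_restrict_iff' measurableSet_Ioo).mpr (ae_of_all _ fun x hx => ?_)
  simp only [RCLike.re_to_complex]
  rw [beta_aux hx.1.le hx.2.le, Complex.ofReal_re]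

lemma beta_val {a b : ℝ} (ha : 0 < a) (hb : 0 < b) :
    ∫ t in Ioo (0:ℝ) 1, t ^ (a-1) * (1-t) ^ (b-1) =
      Real.Gamma a * Real.Gamma b / Real.Gamma (a+b) := by
  have h := Complex.Gamma_mul_Gamma_eq_betaIntegral (s := (a:ℂ)) (t := (b:ℂ)) (by simpa) (by simpa)
  have hab : (0:ℝ) < a + b := by linarith
  have hGr : Real.Gamma (a+b) ≠ 0 :=
    Real.Gamma_ne_zero (fun m => ((neg_nonpos.mpr (Nat.cast_nonneg m)).trans_lt hab).ne')
  have hG : Complex.Gamma ((a:ℂ) + b) ≠ 0 := by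
    rw [show ((a:ℂ)+b) = ((a+b:ℝ):ℂ) by push_cast; ring, Complex.Gamma_ofReal]
    exact_mod_cast hGr
  have hbeta : Complex.betaIntegral a b =
      ((∫ t in Ioo (0:ℝ) 1, t ^ (a-1) * (1-t) ^ (b-1) : ℝ) : ℂ) := by
    rw [Complex.betaIntegral, intervalIntegral.integral_of_le zero_le_one,
        ← integral_Ioc_eq_integral_Ioo (f := fun t : ℝ => t ^ (a-1) * (1-t) ^ (b-1))]
    have hcoe : ∫ x in Ioc (0:ℝ) 1, ((x ^ (a-1) * (1-x) ^ (b-1) : ℝ) : ℂ)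
        = ((∫ x in Ioc (0:ℝ) 1, x ^ (a-1) * (1-x) ^ (b-1) : ℝ) : ℂ) := integral_ofReal
    rw [← hcoe]
    exact setIntegral_congr_ae measurableSet_Ioc
      (ae_of_all _ fun x hx => beta_aux hx.1.le hx.2)
  have := h
  rw [hbeta] at this
  have h2 : Complex.Gamma a * Complex.Gamma b / Complex.Gamma ((a:ℂ)+b)
      = ((∫ t in Ioo (0:ℝ) 1, t ^ (a-1) * (1-t) ^ (b-1) : ℝ) : ℂ) := by
    rw [this]; field_simp
  rw [show (a:ℂ) = ((a:ℝ):ℂ) from rfl] at h2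
  rw [show ((a:ℂ)+b) = ((a+b:ℝ):ℂ) by push_cast; ring] at h2
  rw [Complex.Gamma_ofReal, Complex.Gamma_ofReal, Complex.Gamma_ofReal] at h2
  have := congrArg Complex.re h2
  simpa [← Complex.ofReal_mul, ← Complex.ofReal_div] using this.symm

noncomputable def myB (a b : ℝ) : ℝ := ∫ t in Ioo (0:ℝ) 1, t ^ (a-1) * (1-t) ^ (b-1)

lemma beta_val' {a b : ℝ} (ha : 0 < a) (hb : 0 < b) :
    myB a b = Real.Gamma a * Real.Gamma b / Real.Gamma (a+b) := by
  rw [myB]; exact beta_val ha hb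

lemma beta_key {a b c : ℝ} (hc : 0 < c) {y : ℝ} (hy0 : 0 ≤ y) (hyc : y ≤ c) :
    y ^ (a-1) * (c-y) ^ (b-1)
      = c ^ (a+b-2) * ((y/c) ^ (a-1) * (1-y/c) ^ (b-1)) := by
  have h1 : y = c * (y/c) := by field_simp
  have h2 : c - y = c * (1 - y/c) := by field_simp
  rw [show y ^ (a-1) = (c * (y/c)) ^ (a-1) by rw [← h1],
      show (c-y) ^ (b-1) = (c * (1 - y/c)) ^ (b-1) by rw [← h2],
      Real.mul_rpow hc.le (div_nonneg hy0 hc.le),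
      Real.mul_rpow hc.le (by rw [sub_nonneg]; exact (div_le_one hc).mpr hyc),
      show a+b-2 = (a-1)+(b-1) by ring, Real.rpow_add hc]
  ring

lemma beta_scaled_intble {a b c : ℝ} (ha : 0 < a) (hb : 0 < b) (hc : 0 < c) :
    IntegrableOn (fun y : ℝ => y ^ (a-1) * (c-y) ^ (b-1)) (Ioo 0 c) volume := by
  have h01 : IntervalIntegrable (fun t : ℝ => t ^ (a-1) * (1-t) ^ (b-1)) volume 0 1 := by
    rw [intervalIntegrable_iff_integrableOn_Ioo_of_le zero_le_one]; exact beta_intble ha hb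
  have h2 := (h01.comp_mul_left (c := c⁻¹)).const_mul (c ^ (a+b-2))
  rw [zero_div, one_div, inv_inv,
    intervalIntegrable_iff_integrableOn_Ioo_of_le hc.le] at h2
  refine h2.congr_fun (fun y hy => ?_) measurableSet_Ioo
  rw [beta_key hc hy.1.le hy.2.le]
  simp only [inv_mul_eq_div]

lemma beta_scaled_val {a b c : ℝ} (ha : 0 < a) (hb : 0 < b) (hc : 0 < c) :
    ∫ y in Ioo (0:ℝ) c, y ^ (a-1) * (c-y) ^ (b-1)
      = c ^ (a+b-1) * myB a b := by
  rw [← integral_Ioc_eq_integral_Ioo, ← intervalIntegral.integral_of_le hc.le]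
  rw [intervalIntegral.integral_congr (g := fun y : ℝ =>
      c ^ (a+b-2) * ((y/c) ^ (a-1) * (1-y/c) ^ (b-1)))
    (by rw [uIcc_of_le hc.le]; exact fun y hy => beta_key hc hy.1 hy.2)]
  rw [intervalIntegral.integral_const_mul,
    intervalIntegral.integral_comp_div (f := fun t : ℝ => t ^ (a-1) * (1-t) ^ (b-1)) hc.ne',
    zero_div, div_self hc.ne', smul_eq_mul,
    intervalIntegral.integral_of_le zero_le_one, integral_Ioc_eq_integral_Ioo, myB]
  rw [← mul_assoc, show c ^ (a+b-2) * c = c ^ (a+b-1) by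
    rw [show a+b-1 = (a+b-2)+1 by ring, Real.rpow_add_one hc.ne']]

noncomputable def gg (a b : ℝ) (p : ℝ × ℝ) : ℝ :=
  p.1 ^ (a-1) * p.2 ^ (a-1) * |p.1 - p.2| ^ (b-1)

lemma gg_meas (a b : ℝ) : Measurable (gg a b) := by
  unfold gg; measurability

lemma gg_nonneg (a b : ℝ) {p : ℝ × ℝ} (h1 : 0 ≤ p.1) (h2 : 0 ≤ p.2) : 0 ≤ gg a b p := by
  unfold gg
  have := Real.rpow_nonneg h1 (a-1)
  have := Real.rpow_nonneg h2 (a-1)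
  have := Real.rpow_nonneg (abs_nonneg (p.1 - p.2)) (b-1)
  positivity

lemma gg_swap (a b : ℝ) (p : ℝ × ℝ) : gg a b p.swap = gg a b p := by
  unfold gg
  simp only [Prod.fst_swap, Prod.snd_swap, abs_sub_comm]
  ring

def Tlow : Set (ℝ × ℝ) := (Ioo (0:ℝ) 1 ×ˢ Ioo (0:ℝ) 1) ∩ {p : ℝ × ℝ | p.2 < p.1}


lemma Tlow_meas : MeasurableSet Tlow :=
  (measurableSet_Ioo.prod measurableSet_Ioo).inter (measurableSet_lt measurable_snd measurable_fst)

lemma lower_tri {a b : ℝ} (ha : 0 < a) (hb : 0 < b) (h2 : 0 < 2*a+b-1) :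
    Integrable (Tlow.indicator (gg a b)) volume ∧
    ∫ p, Tlow.indicator (gg a b) p = myB a b / (2*a+b-1) := by
  set B := myB a b with hB
  set F := Tlow.indicator (gg a b) with hF
  set r := 2*a+b-2 with hr
  -- slice description
  have hmem : ∀ x y : ℝ, (x, y) ∈ Tlow ↔ x ∈ Ioo (0:ℝ) 1 ∧ y ∈ Ioo 0 x ∧ y < 1 := by
    intro x y
    simp only [Tlow, mem_inter_iff, mem_prod, mem_setOf_eq, mem_Ioo]
    tauto
  have hslice : ∀ x ∈ Ioo (0:ℝ) 1, (fun y => F (x, y)) =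
      (Ioo (0:ℝ) x).indicator (fun y => gg a b (x, y)) := by
    intro x hx
    funext y
    by_cases hy : y ∈ Ioo (0:ℝ) x
    · rw [indicator_of_mem hy, hF, indicator_of_mem]
      rw [hmem]; exact ⟨hx, hy, hy.2.trans hx.2⟩
    · rw [indicator_of_notMem hy, hF, indicator_of_notMem]
      rw [hmem]; tauto
  have hslice0 : ∀ x : ℝ, x ∉ Ioo (0:ℝ) 1 → (fun y => F (x, y)) = (fun _ => (0:ℝ)) := by
    intro x hx
    funext y
    rw [hF, indicator_of_notMem]
    rw [hmem]; tauto
  -- inner integrability and value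
  have hinner_int : ∀ x ∈ Ioo (0:ℝ) 1,
      IntegrableOn (fun y => gg a b (x, y)) (Ioo 0 x) volume := by
    intro x hx
    refine IntegrableOn.congr_fun ((beta_scaled_intble ha hb hx.1).const_mul (x ^ (a-1)))
      (fun y hy => ?_) measurableSet_Ioo
    simp only [gg]
    rw [abs_of_pos (sub_pos.mpr hy.2)]
    ring
  have hinner_val : ∀ x ∈ Ioo (0:ℝ) 1,
      ∫ y in Ioo (0:ℝ) x, gg a b (x, y) = B * x ^ r := by
    intro x hx
    have : ∫ y in Ioo (0:ℝ) x, gg a b (x, y)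
        = ∫ y in Ioo (0:ℝ) x, x ^ (a-1) * (y ^ (a-1) * (x - y) ^ (b-1)) := by
      refine setIntegral_congr_ae measurableSet_Ioo (ae_of_all _ fun y hy => ?_)
      simp only [gg]
      rw [abs_of_pos (sub_pos.mpr hy.2)]
      ring
    rw [this, integral_const_mul, beta_scaled_val ha hb hx.1, ← hB,
      show x ^ (a-1) * (x ^ (a+b-1) * B) = x ^ (a-1) * x ^ (a+b-1) * B by ring,
      ← Real.rpow_add hx.1, show a-1+(a+b-1) = 2*a+b-2 by ring, hr]
    ring
  -- the outer function
  set φ := (Ioo (0:ℝ) 1).indicator (fun x => B * x ^ r) with hφ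
  have hφ_int : Integrable φ volume := by
    rw [hφ, integrable_indicator_iff measurableSet_Ioo]
    have := intervalIntegral.intervalIntegrable_rpow' (a := 0) (b := 1) (r := r)
      (by rw [hr]; linarith)
    rw [intervalIntegrable_iff_integrableOn_Ioo_of_le zero_le_one] at this
    exact this.const_mul B
  have hφ_val : ∫ x, φ x = B / (2*a+b-1) := by
    rw [hφ, integral_indicator measurableSet_Ioo, integral_const_mul,
      ← integral_Ioc_eq_integral_Ioo, ← intervalIntegral.integral_of_le zero_le_one,
      integral_rpow (Or.inl (by rw [hr]; linarith))]
    rw [Real.one_rpow, Real.zero_rpow (by rw [hr]; intro h; linarith [h ▸ h2]), hr]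
    ring_nf
  -- nonnegativity
  have hF_nonneg : ∀ p : ℝ × ℝ, 0 ≤ F p := by
    intro p
    exact indicator_nonneg (fun q hq => gg_nonneg a b hq.1.1.1.le hq.1.2.1.le) p
  -- slice integrals
  have hslice_intble : ∀ x : ℝ, Integrable (fun y => F (x, y)) volume := by
    intro x
    by_cases hx : x ∈ Ioo (0:ℝ) 1
    · rw [hslice x hx]
      exact (integrable_indicator_iff measurableSet_Ioo).mpr (hinner_int x hx)
    · rw [hslice0 x hx]; exact integrable_zero _ _ _
  have hslice_val : ∀ x : ℝ, ∫ y, F (x, y) = φ x := by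
    intro x
    by_cases hx : x ∈ Ioo (0:ℝ) 1
    · rw [hslice x hx, integral_indicator measurableSet_Ioo, hinner_val x hx,
        hφ, indicator_of_mem hx]
    · rw [hslice0 x hx, hφ, indicator_of_notMem hx]
      simp
  have hFmeas : AEStronglyMeasurable F (volume.prod volume) := by
    rw [← Measure.volume_eq_prod]
    exact ((gg_meas a b).indicator Tlow_meas).aestronglyMeasurable
  have hcond2 : (fun x => ∫ y, ‖F (x, y)‖) = φ := by
    funext x
    rw [← hslice_val x]
    congr 1
    funext y
    rw [Real.norm_of_nonneg (hF_nonneg _)]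
  have hFint : Integrable F volume := by
    rw [Measure.volume_eq_prod]
    exact (integrable_prod_iff hFmeas).mpr
      ⟨ae_of_all _ hslice_intble, by rw [hcond2]; exact hφ_int⟩
  refine ⟨hFint, ?_⟩
  have := integral_prod F (by rw [← Measure.volume_eq_prod]; exact hFint)
  rw [← Measure.volume_eq_prod] at this
  rw [this]
  simp_rw [hslice_val]
  exact hφ_val

def Tup : Set (ℝ × ℝ) := (Ioo (0:ℝ) 1 ×ˢ Ioo (0:ℝ) 1) ∩ {p : ℝ × ℝ | p.1 < p.2}

lemma Tup_meas : MeasurableSet Tup :=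
  (measurableSet_Ioo.prod measurableSet_Ioo).inter (measurableSet_lt measurable_fst measurable_snd)

lemma swap_pre : (Prod.swap : ℝ × ℝ → ℝ × ℝ) ⁻¹' Tlow = Tup := by
  ext p
  simp only [Tlow, Tup, mem_preimage, mem_inter_iff, mem_prod, mem_setOf_eq, Prod.fst_swap,
    Prod.snd_swap]
  tauto

lemma swap_mp : MeasurePreserving (Prod.swap : ℝ × ℝ → ℝ × ℝ) volume volume := by
  rw [Measure.volume_eq_prod]
  exact Measure.measurePreserving_swap

lemma square_result {a b : ℝ} (ha : 0 < a) (hb : 0 < b) (h2 : 0 < 2*a+b-1) :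
    IntegrableOn (gg a b) (Ioo (0:ℝ) 1 ×ˢ Ioo (0:ℝ) 1) volume ∧
    ∫ p in Ioo (0:ℝ) 1 ×ˢ Ioo (0:ℝ) 1, gg a b p = 2 * myB a b / (2*a+b-1) := by
  obtain ⟨hint, hval⟩ := lower_tri ha hb h2
  rw [integrable_indicator_iff Tlow_meas] at hint
  rw [integral_indicator Tlow_meas] at hval
  have emb : MeasurableEmbedding (Prod.swap : ℝ × ℝ → ℝ × ℝ) :=
    MeasurableEquiv.prodComm.measurableEmbedding
  -- upper triangle
  have hint' : IntegrableOn (gg a b) Tup volume := by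
    have := (swap_mp.integrableOn_comp_preimage emb).mpr hint
    rw [swap_pre] at this
    exact this.congr_fun (fun p hp => by simpa using gg_swap a b p) Tup_meas
  have hval' : ∫ p in Tup, gg a b p = ∫ p in Tlow, gg a b p := by
    have := swap_mp.setIntegral_preimage_emb emb (gg a b) Tlow
    rw [swap_pre] at this
    rw [← this]
    exact setIntegral_congr_ae Tup_meas (ae_of_all _ fun p _ => (gg_swap a b p).symm)
  -- diagonal is null
  have hdiag : volume {p : ℝ × ℝ | p.1 = p.2} = 0 := by
    rw [Measure.volume_eq_prod]
    rw [Measure.measure_prod_null (measurableSet_eq_fun measurable_fst measurable_snd)]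
    refine ae_of_all _ fun x => ?_
    have hpre : (Prod.mk x ⁻¹' {p : ℝ × ℝ | p.1 = p.2}) = {x} := by
      ext y; simp [eq_comm]
    show volume (Prod.mk x ⁻¹' {p : ℝ × ℝ | p.1 = p.2}) = 0
    rw [hpre]
    exact measure_singleton x
  -- square ae-equal to union
  have hsub : Tlow ∪ Tup ⊆ Ioo (0:ℝ) 1 ×ˢ Ioo (0:ℝ) 1 :=
    union_subset inter_subset_left inter_subset_left
  have haeeq : (Ioo (0:ℝ) 1 ×ˢ Ioo (0:ℝ) 1 : Set (ℝ × ℝ)) =ᵐ[volume] (Tlow ∪ Tup : Set (ℝ × ℝ)) := by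
    rw [MeasureTheory.ae_eq_set]
    constructor
    · refine measure_mono_null (fun p hp => ?_) hdiag
      obtain ⟨hp1, hp2⟩ := hp
      simp only [Tlow, Tup, mem_union, mem_inter_iff, mem_setOf_eq, not_or, not_and] at hp2
      have h1 := hp2.1 hp1
      have h2 := hp2.2 hp1
      exact le_antisymm (not_lt.mp h1) (not_lt.mp h2)
    · rw [diff_eq_empty.mpr hsub]
      simp
  have hdisj : Disjoint Tlow Tup := by
    rw [disjoint_left]
    rintro p ⟨_, (hp1 : p.2 < p.1)⟩ ⟨_, (hp2 : p.1 < p.2)⟩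
    exact absurd (hp1.trans hp2) (lt_irrefl _)
  constructor
  · exact (hint.union hint').congr_set_ae haeeq
  · rw [setIntegral_congr_set haeeq,
      setIntegral_union hdisj Tup_meas hint hint', hval', hval]
    ring

noncomputable def Hintegrand (γ α : ℝ) (p : ℝ × ℝ) : ℝ :=
  p.1 ^ (-(γ * α) / 2 - 1) * p.2 ^ (-(γ * α) / 2 - 1) *
    |p.1 - p.2| ^ (-(γ ^ 2) / 2)

noncomputable def H (γ α : ℝ) : ℝ :=
  ∫ p in (Ioo (0 : ℝ) 1) ×ˢ (Ioo (0 : ℝ) 1), Hintegrand γ α p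

lemma Hintegrand_eq (γ α : ℝ) : Hintegrand γ α = gg (-(γ * α) / 2) (1 - γ^2/2) := by
  funext p
  simp only [Hintegrand, gg]
  rw [show (-(γ^2)/2 : ℝ) = 1 - γ^2/2 - 1 by ring]

theorem stmt5 (γ : ℝ) (hγ0 : 0 < γ) (hγ2 : γ < Real.sqrt 2) :
    (∀ α : ℝ, α < -γ / 2 →
      IntegrableOn (Hintegrand γ α) ((Ioo (0 : ℝ) 1) ×ˢ (Ioo (0 : ℝ) 1)) volume) ∧
    Filter.Tendsto (fun α : ℝ => (α + γ / 2) * H γ α)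
      (nhdsWithin (-γ / 2) (Iio (-γ / 2)))
      (nhds (-(2 / γ) * Real.Gamma (γ ^ 2 / 4) * Real.Gamma (1 - γ ^ 2 / 2) /
        Real.Gamma (1 - γ ^ 2 / 4))) := by
  have hγsq : γ^2 < 2 := by
    have h := Real.sq_sqrt (by norm_num : (0:ℝ) ≤ 2)
    nlinarith [Real.sqrt_nonneg 2]
  have hb : 0 < 1 - γ^2/2 := by linarith
  have key : ∀ α : ℝ, α < -γ/2 →
      (0 < -(γ * α) / 2 ∧ 0 < 2 * (-(γ * α) / 2) + (1 - γ^2/2) - 1) := by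
    intro α hα
    constructor <;> nlinarith
  constructor
  · intro α hα
    rw [Hintegrand_eq]
    exact (square_result (key α hα).1 hb (key α hα).2).1
  · -- the limit
    set G : ℝ → ℝ := fun α => -(2/γ) * (Real.Gamma (-(γ * α)/2) * Real.Gamma (1 - γ^2/2) /
      Real.Gamma (-(γ * α)/2 + (1 - γ^2/2))) with hG
    have hval : ∀ α : ℝ, α < -γ/2 → (α + γ/2) * H γ α = G α := by
      intro α hα
      obtain ⟨ha, h2⟩ := key α hα
      have hHval : H γ α = 2 * myB (-(γ * α)/2) (1 - γ^2/2)
          / (2 * (-(γ * α) / 2) + (1 - γ^2/2) - 1) := by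
        rw [H, Hintegrand_eq]
        exact (square_result ha hb h2).2
      rw [hHval, beta_val' ha hb]
      simp only [hG]
      have hd : 2 * (-(γ * α) / 2) + (1 - γ^2/2) - 1 = -γ * (α + γ/2) := by ring
      rw [hd]
      have hs : α + γ/2 ≠ 0 := by linarith
      generalize Real.Gamma (-(γ * α)/2) * Real.Gamma (1 - γ^2/2) /
        Real.Gamma (-(γ * α)/2 + (1 - γ^2/2)) = X
      have habs : ∀ s X g : ℝ, s ≠ 0 → g ≠ 0 → s * (2*X/(-g*s)) = -(2/g)*X := by
        intro s X g h1 h2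
        field_simp
      exact habs _ _ _ hs hγ0.ne'
    have hcont : ContinuousAt G (-γ/2) := by
      have hl : Continuous (fun α : ℝ => -(γ * α)/2) := by continuity
      have ha0 : -(γ * (-γ/2))/2 = γ^2/4 := by ring
      have hΓ1 : ContinuousAt (fun α : ℝ => Real.Gamma (-(γ * α)/2)) (-γ/2) := by
        refine (Real.differentiableAt_Gamma ?_).continuousAt.comp hl.continuousAt
        rw [ha0]
        intro m
        have : (0:ℝ) < γ^2/4 := by positivity
        intro h; rw [h] at this; nlinarith [Nat.cast_nonneg (α := ℝ) m]
      have hΓ2 : ContinuousAt (fun α : ℝ => Real.Gamma (-(γ * α)/2 + (1 - γ^2/2))) (-γ/2) := by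
        refine (Real.differentiableAt_Gamma ?_).continuousAt.comp
          (by continuity : Continuous (fun α : ℝ => -(γ * α)/2 + (1 - γ^2/2))).continuousAt
        rw [ha0]
        intro m
        have : (0:ℝ) < γ^2/4 + (1 - γ^2/2) := by nlinarith
        intro h; rw [h] at this; nlinarith [Nat.cast_nonneg (α := ℝ) m]
      have hden : Real.Gamma (-(γ * (-γ/2))/2 + (1 - γ^2/2)) ≠ 0 := by
        rw [ha0]
        refine Real.Gamma_ne_zero fun m => ?_
        have : (0:ℝ) < γ^2/4 + (1 - γ^2/2) := by nlinarith
        intro h; rw [h] at this; nlinarith [Nat.cast_nonneg (α := ℝ) m]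
      exact continuousAt_const.mul ((hΓ1.mul continuousAt_const).div hΓ2 hden)
    have hGlim : G (-γ/2) = -(2 / γ) * Real.Gamma (γ ^ 2 / 4) * Real.Gamma (1 - γ ^ 2 / 2) /
        Real.Gamma (1 - γ ^ 2 / 4) := by
      simp only [hG]
      rw [show -(γ * (-γ/2))/2 + (1 - γ^2/2) = 1 - γ^2/4 by ring,
        show -(γ * (-γ/2))/2 = γ^2/4 by ring]
      ring
    have htend : Filter.Tendsto G (nhdsWithin (-γ/2) (Iio (-γ/2)))
        (nhds (-(2 / γ) * Real.Gamma (γ ^ 2 / 4) * Real.Gamma (1 - γ ^ 2 / 2) /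
        Real.Gamma (1 - γ ^ 2 / 4))) := by
      rw [← hGlim]
      exact hcont.tendsto.mono_left nhdsWithin_le_nhds
    refine Filter.Tendsto.congr' ?_ htend
    filter_upwards [self_mem_nhdsWithin] with α hα
    exact (hval α hα).symm
end

section
/- Let γ ∈ (0, √2). Then ∫_{0}^{π} (2 sin θ)^{−γ²/2} cos(2θ) dθ = sin(π γ²/4) · ((γ²/4)/(1 − γ²/4)) · Γ(1 − γ²/2) Γ(γ²/4) / Γ(1 − γ²/4), the integral on the left being absolutely convergent. -/
open MeasureTheory Set

lemma complexBeta_restrict {u v : ℝ} (hu : 0 < u) (hv : 0 < v) :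
    ∀ x ∈ Ioo (0:ℝ) 1,
      ((x:ℂ) ^ ((u:ℂ)-1) * (1-(x:ℂ)) ^ ((v:ℂ)-1)) = ((x ^ (u-1) * (1-x) ^ (v-1) : ℝ) : ℂ) := by
  intro x hx
  have h1 : ((x:ℝ) ^ (u-1) : ℝ) = (x:ℂ) ^ ((u:ℂ)-1) := by
    rw [Complex.ofReal_cpow hx.1.le]; push_cast; ring_nf
  have h2 : ((1 - x : ℝ) ^ (v-1) : ℝ) = ((1:ℂ)-(x:ℂ)) ^ ((v:ℂ)-1) := by
    rw [Complex.ofReal_cpow (by linarith [hx.2])]; push_cast; ring_nf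
  push_cast [← h1, ← h2]
  ring

lemma realBeta_integrableOn {u v : ℝ} (hu : 0 < u) (hv : 0 < v) :
    IntegrableOn (fun t : ℝ => t ^ (u-1) * (1-t) ^ (v-1)) (Ioo 0 1) := by
  have h := Complex.betaIntegral_convergent (u := u) (v := v) (by simpa) (by simpa)
  have h2 : IntegrableOn (fun x : ℝ => (x:ℂ) ^ ((u:ℂ)-1) * (1-(x:ℂ)) ^ ((v:ℂ)-1)) (Ioo 0 1) :=
    (intervalIntegrable_iff_integrableOn_Ioo_of_le zero_le_one).mp h
  have h3 : IntegrableOn (fun x : ℝ => ((x ^ (u-1) * (1-x) ^ (v-1) : ℝ) : ℂ)) (Ioo 0 1) :=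
    h2.congr_fun (complexBeta_restrict hu hv) measurableSet_Ioo
  simpa [IntegrableOn] using h3.re

lemma realBeta_eq {u v : ℝ} (hu : 0 < u) (hv : 0 < v) :
    ∫ t in Ioo (0:ℝ) 1, t ^ (u-1) * (1-t) ^ (v-1)
      = Real.Gamma u * Real.Gamma v / Real.Gamma (u+v) := by
  have hG := Complex.Gamma_mul_Gamma_eq_betaIntegral (s := u) (t := v) (by simpa) (by simpa)
  have hbeta : Complex.betaIntegral u v
      = ((∫ t in Ioo (0:ℝ) 1, t ^ (u-1) * (1-t) ^ (v-1) : ℝ) : ℂ) := by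
    rw [Complex.betaIntegral, intervalIntegral.integral_of_le zero_le_one,
      MeasureTheory.integral_Ioc_eq_integral_Ioo,
      setIntegral_congr_fun measurableSet_Ioo (complexBeta_restrict hu hv)]
    exact integral_ofReal
  rw [hbeta] at hG
  have h2 : ((Real.Gamma u * Real.Gamma v : ℝ) : ℂ)
      = ((Real.Gamma (u+v) * ∫ t in Ioo (0:ℝ) 1, t ^ (u-1) * (1-t) ^ (v-1) : ℝ) : ℂ) := by
    push_cast [← Complex.Gamma_ofReal]
    exact_mod_cast hG
  have h3 := Complex.ofReal_inj.mp h2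
  have hne : Real.Gamma (u+v) ≠ 0 := (Real.Gamma_pos_of_pos (by linarith)).ne'
  field_simp [h3]
  rw [h3]; ring

-- image of cos
lemma cos_image_Ioo : Real.cos '' Ioo 0 Real.pi = Ioo (-1 : ℝ) 1 := by
  apply subset_antisymm
  · rintro y ⟨x, hx, rfl⟩
    constructor
    · have := Real.strictAntiOn_cos ⟨hx.1.le, hx.2.le⟩ ⟨Real.pi_pos.le, le_refl _⟩ hx.2
      simpa [Real.cos_pi] using this
    · have := Real.strictAntiOn_cos ⟨le_refl _, Real.pi_pos.le⟩ ⟨hx.1.le, hx.2.le⟩ hx.1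
      simpa [Real.cos_zero] using this
  · have h := intermediate_value_Ioo' (a := (0:ℝ)) (b := Real.pi) Real.pi_pos.le
      (Real.continuous_cos.continuousOn)
    simpa [Real.cos_zero, Real.cos_pi] using h

lemma affine_image_Ioo : (fun t : ℝ => 2*t - 1) '' Ioo 0 1 = Ioo (-1 : ℝ) 1 := by
  ext x
  simp only [mem_image, mem_Ioo]
  constructor
  · rintro ⟨t, ⟨h1, h2⟩, rfl⟩; constructor <;> linarith
  · rintro ⟨h1, h2⟩; exact ⟨(x+1)/2, ⟨by linarith, by linarith⟩, by ring⟩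

lemma alg_lemma {s X Y Z P R c a A S : ℝ} (hX : X ≠ 0) (hY : Y ≠ 0) (hZ : Z ≠ 0)
    (h2 : 2 - s ≠ 0) (h1 : 1 - s ≠ 0) (hh : 1 - s/2 ≠ 0) (hP : P ≠ 0)
    (ha : a = (1-s)/2) (hc : c = (P*P)⁻¹) (hRR : R * R = Real.pi)
    (hA : A = X * P * R / Z) (hS : S = Real.pi / (Y * Z)) :
    c * (A*A/X) - 8*c*(a*A*(a*A)/((2-s)*((1-s)*X))) = S * ((s/2)/(1-s/2)) * (X*Y/Z) := by
  subst ha hA hS hc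
  rw [← hRR]
  field_simp
  ring

set_option maxHeartbeats 2000000 in
lemma main_lemma {s : ℝ} (hs0 : 0 < s) (hs1 : s < 1) :
    IntegrableOn (fun θ : ℝ => (2 * Real.sin θ) ^ (-s) * Real.cos (2 * θ))
      (Ioo 0 Real.pi) volume ∧
    (∫ θ in Ioo 0 Real.pi, (2 * Real.sin θ) ^ (-s) * Real.cos (2 * θ)) =
      Real.sin (Real.pi * s / 2) * ((s / 2) / (1 - s / 2)) *
        (Real.Gamma (1 - s) * Real.Gamma (s / 2) / Real.Gamma (1 - s / 2)) := by
  set q : ℝ := (-s - 1) / 2 with hq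
  set g : ℝ → ℝ := fun x => 2 ^ (-s) * (1 - x ^ 2) ^ q * (2 * x ^ 2 - 1) with hg
  -- substitution 1 : x = cos θ
  have hd : ∀ θ ∈ Ioo (0:ℝ) Real.pi,
      HasDerivWithinAt Real.cos (-Real.sin θ) (Ioo 0 Real.pi) θ :=
    fun θ _ => (Real.hasDerivAt_cos θ).hasDerivWithinAt
  have hinj : InjOn Real.cos (Ioo 0 Real.pi) :=
    Real.injOn_cos.mono (Ioo_subset_Icc_self)
  have hpt : ∀ θ ∈ Ioo (0:ℝ) Real.pi,
      |(-Real.sin θ)| • g (Real.cos θ) = (2 * Real.sin θ) ^ (-s) * Real.cos (2 * θ) := by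
    intro θ hθ
    have hsinpos : 0 < Real.sin θ := Real.sin_pos_of_pos_of_lt_pi hθ.1 hθ.2
    have h1 : (1 : ℝ) - Real.cos θ ^ 2 = Real.sin θ ^ 2 := by
      have := Real.sin_sq_add_cos_sq θ; linarith
    have h2 : (Real.sin θ ^ 2 : ℝ) ^ q = Real.sin θ ^ (-s - 1) := by
      rw [← Real.rpow_natCast (Real.sin θ) 2, ← Real.rpow_mul hsinpos.le]
      norm_num [hq]
      ring_nf
    have h3 : (2 * Real.sin θ) ^ (-s) = 2 ^ (-s) * Real.sin θ ^ (-s) :=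
      Real.mul_rpow (by norm_num) hsinpos.le
    have h4 : Real.sin θ * Real.sin θ ^ (-s - 1) = Real.sin θ ^ (-s) := by
      rw [show (-s : ℝ) = (-s - 1) + 1 by ring, Real.rpow_add_one hsinpos.ne']
      ring
    simp only [hg, smul_eq_mul, abs_neg, abs_of_pos hsinpos, h1, h2,
      Real.cos_two_mul, h3]
    calc Real.sin θ * (2 ^ (-s) * Real.sin θ ^ (-s - 1) * (2 * Real.cos θ ^ 2 - 1))
        = (Real.sin θ * Real.sin θ ^ (-s-1)) * 2 ^ (-s) * (2 * Real.cos θ ^ 2 - 1) := by ring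
      _ = 2 ^ (-s) * Real.sin θ ^ (-s) * (2 * Real.cos θ ^ 2 - 1) := by rw [h4]; ring
  -- reduce to integral over Ioo (-1) 1
  have hsub1int : IntegrableOn g (Ioo (-1:ℝ) 1) ↔
      IntegrableOn (fun θ : ℝ => (2 * Real.sin θ) ^ (-s) * Real.cos (2 * θ))
        (Ioo 0 Real.pi) := by
    rw [← cos_image_Ioo,
      integrableOn_image_iff_integrableOn_abs_deriv_smul measurableSet_Ioo hd hinj g]
    exact integrableOn_congr_fun hpt measurableSet_Ioo
  have hsub1 : (∫ x in Ioo (-1:ℝ) 1, g x)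
      = ∫ θ in Ioo 0 Real.pi, (2 * Real.sin θ) ^ (-s) * Real.cos (2 * θ) := by
    rw [← cos_image_Ioo,
      integral_image_eq_integral_abs_deriv_smul measurableSet_Ioo hd hinj g]
    exact setIntegral_congr_fun measurableSet_Ioo hpt
  -- substitution 2 : x = 2t - 1
  set a : ℝ := (1 - s) / 2 with ha
  have ha0 : 0 < a := by rw [ha]; linarith
  set c : ℝ := 2 * (2 ^ (-s) * 2 ^ (-s - 1)) with hc
  have hd2 : ∀ t ∈ Ioo (0:ℝ) 1, HasDerivWithinAt (fun t : ℝ => 2*t - 1) 2 (Ioo 0 1) t := by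
    intro t _
    simpa using (((hasDerivAt_id t).const_mul 2).sub_const 1).hasDerivWithinAt
  have hinj2 : InjOn (fun t : ℝ => 2*t - 1) (Ioo (0:ℝ) 1) := fun x _ y _ h => by
    dsimp at h; linarith
  have hpt2 : ∀ t ∈ Ioo (0:ℝ) 1, |(2:ℝ)| • g (2*t - 1)
      = c * (t ^ (a-1) * (1-t) ^ (a-1)) - 8 * c * (t ^ a * (1-t) ^ a) := by
    intro t ht
    have ht0 : 0 < t := ht.1
    have ht1 : 0 < 1 - t := by linarith [ht.2]
    have e1 : (1:ℝ) - (2*t - 1) ^ 2 = 4 * (t * (1 - t)) := by ring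
    have e2 : ((4:ℝ) * (t * (1-t))) ^ q = 2 ^ (-s-1) * (t ^ (a-1) * (1-t) ^ (a-1)) := by
      rw [Real.mul_rpow (by norm_num) (by positivity),
        Real.mul_rpow ht0.le ht1.le]
      have h4 : ((4:ℝ)) ^ q = 2 ^ (-s-1) := by
        rw [show (4:ℝ) = (2:ℝ) ^ (2:ℝ) by
          rw [show (2:ℝ) = ((2:ℕ):ℝ) by norm_num, Real.rpow_natCast]; norm_num,
          ← Real.rpow_mul (by norm_num)]
        congr 1
        rw [hq]; ring
      have hqa : q = a - 1 := by rw [hq, ha]; ring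
      rw [h4, hqa]
    have e3 : (2:ℝ) * (2*t - 1) ^ 2 - 1 = 1 - 8 * (t * (1-t)) := by ring
    have e4 : t * t ^ (a-1) = t ^ a := by
      rw [show (a:ℝ) = (a-1) + 1 by ring, Real.rpow_add_one ht0.ne']; ring
    have e5 : (1-t) * (1-t) ^ (a-1) = (1-t) ^ a := by
      rw [show (a:ℝ) = (a-1) + 1 by ring, Real.rpow_add_one ht1.ne']; ring
    simp only [hg, smul_eq_mul, e1, e2, e3, abs_two]
    rw [← e4, ← e5, hc]
    ring
  have hB1i : IntegrableOn (fun t : ℝ => t ^ (a-1) * (1-t) ^ (a-1)) (Ioo 0 1) :=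
    realBeta_integrableOn ha0 ha0
  have hB2i : IntegrableOn (fun t : ℝ => t ^ a * (1-t) ^ a) (Ioo 0 1) := by
    have := realBeta_integrableOn (u := a+1) (v := a+1) (by linarith) (by linarith)
    simpa using this
  have hint2 : IntegrableOn
      (fun t : ℝ => c * (t ^ (a-1) * (1-t) ^ (a-1)) - 8 * c * (t ^ a * (1-t) ^ a))
      (Ioo 0 1) := (hB1i.const_mul c).sub (hB2i.const_mul (8*c))
  have hgood : IntegrableOn g (Ioo (-1:ℝ) 1) := by
    rw [← affine_image_Ioo,
      integrableOn_image_iff_integrableOn_abs_deriv_smul measurableSet_Ioo hd2 hinj2 g]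
    exact (integrableOn_congr_fun hpt2 measurableSet_Ioo).mpr hint2
  have hsub2 : (∫ x in Ioo (-1:ℝ) 1, g x)
      = ∫ t in Ioo (0:ℝ) 1,
          (c * (t ^ (a-1) * (1-t) ^ (a-1)) - 8 * c * (t ^ a * (1-t) ^ a)) := by
    rw [← affine_image_Ioo,
      integral_image_eq_integral_abs_deriv_smul measurableSet_Ioo hd2 hinj2 g]
    exact setIntegral_congr_fun measurableSet_Ioo hpt2
  have hval : (∫ x in Ioo (-1:ℝ) 1, g x)
      = c * (Real.Gamma a * Real.Gamma a / Real.Gamma (a+a))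
        - 8 * c * (Real.Gamma (a+1) * Real.Gamma (a+1) / Real.Gamma ((a+1)+(a+1))) := by
    rw [hsub2, integral_sub (hB1i.const_mul c) (hB2i.const_mul (8*c)),
      integral_const_mul, integral_const_mul, realBeta_eq ha0 ha0]
    have := realBeta_eq (u := a+1) (v := a+1) (by linarith) (by linarith)
    simp only [add_sub_cancel_right] at this
    rw [this]
  refine ⟨hsub1int.mp hgood, ?_⟩
  rw [← hsub1, hval]
  -- final Gamma algebra
  have hX : 0 < Real.Gamma (1-s) := Real.Gamma_pos_of_pos (by linarith)
  have hY : 0 < Real.Gamma (s/2) := Real.Gamma_pos_of_pos (by linarith)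
  have hZ : 0 < Real.Gamma (1-s/2) := Real.Gamma_pos_of_pos (by linarith)
  have hP : (0:ℝ) < 2 ^ s := Real.rpow_pos_of_pos two_pos s
  have hR : (0:ℝ) < Real.sqrt Real.pi := Real.sqrt_pos.mpr Real.pi_pos
  have hpiRR : Real.sqrt Real.pi * Real.sqrt Real.pi = Real.pi :=
    Real.mul_self_sqrt Real.pi_pos.le
  have haa : a + a = 1 - s := by rw [ha]; ring
  have hGa1 : Real.Gamma (a+1) = a * Real.Gamma a := Real.Gamma_add_one ha0.ne'
  have hG22 : Real.Gamma ((a+1)+(a+1)) = (2-s) * ((1-s) * Real.Gamma (1-s)) := by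
    rw [show (a+1)+(a+1) = ((1-s)+1)+1 by rw [ha]; ring,
      Real.Gamma_add_one (by linarith), Real.Gamma_add_one (by linarith)]
    ring
  have hdup := Real.Gamma_mul_Gamma_add_half a
  rw [show a + 1/2 = 1 - s/2 by rw [ha]; ring, show 2*a = 1-s by rw [ha]; ring,
    show (1:ℝ) - (1-s) = s by ring] at hdup
  have hGaeq : Real.Gamma a
      = Real.Gamma (1-s) * 2 ^ s * Real.sqrt Real.pi / Real.Gamma (1-s/2) := by
    rw [eq_div_iff hZ.ne']
    exact hdup
  have hsinpos : 0 < Real.sin (Real.pi * s / 2) :=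
    Real.sin_pos_of_pos_of_lt_pi (by positivity) (by nlinarith [Real.pi_pos])
  have href := Real.Gamma_mul_Gamma_one_sub (s/2)
  rw [show Real.pi * (s/2) = Real.pi * s / 2 by ring] at href
  have hsineq : Real.sin (Real.pi * s / 2)
      = Real.pi / (Real.Gamma (s/2) * Real.Gamma (1-s/2)) := by
    rw [href]
    field_simp
  have hcpow : ((2:ℝ) ^ s * 2 ^ s) * c = 1 := by
    rw [hc, show (2:ℝ) ^ s * 2 ^ s * (2 * (2 ^ (-s) * 2 ^ (-s-1)))
        = 2 * ((2:ℝ) ^ s * 2 ^ (-s)) * (2 ^ s * 2 ^ (-s-1)) by ring,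
      ← Real.rpow_add two_pos, ← Real.rpow_add two_pos,
      show s + -s = 0 by ring, show s + (-s-1) = -1 by ring,
      Real.rpow_zero, Real.rpow_neg_one]
    norm_num
  have hceq : c = ((2:ℝ) ^ s * 2 ^ s)⁻¹ := eq_inv_of_mul_eq_one_right hcpow
  rw [haa, hGa1, hG22]
  exact alg_lemma hX.ne' hY.ne' hZ.ne' (by linarith) (by linarith) (by linarith)
    hP.ne' ha hceq hpiRR hGaeq hsineq

theorem stmt6 (γ : ℝ) (hγ0 : 0 < γ) (hγ2 : γ < Real.sqrt 2) :
    IntegrableOn (fun θ : ℝ => (2 * Real.sin θ) ^ (-(γ ^ 2) / 2) * Real.cos (2 * θ))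
      (Ioo 0 Real.pi) volume ∧
    (∫ θ in Ioo 0 Real.pi, (2 * Real.sin θ) ^ (-(γ ^ 2) / 2) * Real.cos (2 * θ)) =
      Real.sin (Real.pi * γ ^ 2 / 4) * ((γ ^ 2 / 4) / (1 - γ ^ 2 / 4)) *
        (Real.Gamma (1 - γ ^ 2 / 2) * Real.Gamma (γ ^ 2 / 4) /
          Real.Gamma (1 - γ ^ 2 / 4)) := by
  have hlt : γ ^ 2 < 2 := by
    nlinarith [Real.sq_sqrt (by norm_num : (0:ℝ) ≤ 2), Real.sqrt_nonneg 2]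
  have hm := main_lemma (s := γ ^ 2 / 2) (by positivity) (by linarith)
  have e1 : -(γ ^ 2) / 2 = -(γ ^ 2 / 2) := by ring
  have e2 : Real.pi * γ ^ 2 / 4 = Real.pi * (γ ^ 2 / 2) / 2 := by ring
  have e3 : γ ^ 2 / 4 = γ ^ 2 / 2 / 2 := by ring
  rw [e1, e2, e3]
  exact hm
end

section
/- Let γ ∈ (0, √2) and let α be real with α < −γ/2. Then the integral ∫_{𝔻²} |w₁|^{−γα−2} |w₂|^{−γα−2} |w₁−w₂|^{−γ²} |dw₁|² |dw₂|² is finite. -/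
open MeasureTheory Set
open scoped ENNReal NNReal

lemma measurable_rpow_const (c : ℝ) : Measurable fun x : ℝ => x ^ c :=
  measurable_of_continuousOn_compl_singleton 0 (continuousOn_id.rpow_const fun _ hx => Or.inl hx)

lemma measurable_abs_rpow (c : ℝ) : Measurable fun w : ℂ => ‖w‖ ^ c :=
  (measurable_rpow_const c).comp continuous_norm.measurable

lemma vol_ball (R : ℝ) (hR : 0 ≤ R) :
    volume (Metric.ball (0:ℂ) R) = ENNReal.ofReal (Real.pi * R ^ 2) := by
  rw [Complex.volume_ball, ← ENNReal.ofReal_pow hR]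
  rw [ENNReal.ofReal_mul Real.pi_pos.le, mul_comm]
  congr 1
  rw [← NNReal.coe_real_pi, ENNReal.ofReal_coe_nnreal]

lemma lint_ball_rpow {p : ℝ} (h2 : -2 < p) (h0 : p ≤ 0) :
    ∃ C : ℝ≥0∞, C ≠ ⊤ ∧ ∀ r : ℝ, 0 < r →
      (∫⁻ w in Metric.ball (0:ℂ) r, ENNReal.ofReal (‖w‖ ^ p)) ≤
        C * ENNReal.ofReal (r ^ (p + 2)) := by
  set q : ℝ := (2:ℝ)⁻¹ ^ (p + 2) with hq
  have hq0 : 0 ≤ q := Real.rpow_nonneg (by norm_num) _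
  have hq1 : q < 1 := Real.rpow_lt_one (by norm_num) (by norm_num) (by linarith)
  refine ⟨ENNReal.ofReal (Real.pi * (2:ℝ)⁻¹ ^ p) * (1 - ENNReal.ofReal q)⁻¹, ?_, ?_⟩
  · refine ENNReal.mul_ne_top ENNReal.ofReal_ne_top (ENNReal.inv_ne_top.mpr ?_)
    exact (tsub_pos_of_lt (ENNReal.ofReal_lt_one.mpr hq1)).ne'
  intro r hr
  set S : ℕ → Set ℂ := fun n =>
    {w | r * (2:ℝ)⁻¹ ^ (n + 1) ≤ ‖w‖} ∩ Metric.ball (0:ℂ) (r * (2:ℝ)⁻¹ ^ n) with hS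
  have cover : Metric.ball (0:ℂ) r ⊆ {0} ∪ ⋃ n, S n := by
    intro w hw
    rcases eq_or_ne w 0 with h | h
    · exact Or.inl h
    right
    have htpos : 0 < ‖w‖ := norm_pos_iff.mpr h
    have htlt : ‖w‖ < r := by
      simpa [Complex.dist_eq] using Metric.mem_ball.mp hw
    have hex : ∃ n : ℕ, r * (2:ℝ)⁻¹ ^ (n + 1) ≤ ‖w‖ := by
      obtain ⟨m, hm⟩ := exists_pow_lt_of_lt_one (div_pos htpos hr) (by norm_num : (2:ℝ)⁻¹ < 1)
      refine ⟨m, ?_⟩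
      have h1 : ((2:ℝ)⁻¹) ^ (m + 1) ≤ (2:ℝ)⁻¹ ^ m :=
        pow_le_pow_of_le_one (by norm_num) (by norm_num) (by omega)
      have h2' : (2:ℝ)⁻¹ ^ m * r < ‖w‖ := by
        have := (lt_div_iff₀ hr).mp hm
        nlinarith
      nlinarith
    refine mem_iUnion.mpr ⟨Nat.find hex, ?_, ?_⟩
    · exact Nat.find_spec hex
    · rw [Metric.mem_ball]
      rw [Complex.dist_eq, sub_zero]
      rcases Nat.eq_zero_or_pos (Nat.find hex) with h0' | h0'
      · rw [h0']; simpa using htlt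
      · obtain ⟨m, hm⟩ := Nat.exists_eq_succ_of_ne_zero h0'.ne'
        have hmin := Nat.find_min hex (show m < Nat.find hex by omega)
        rw [hm]
        exact lt_of_not_ge (by simpa [Nat.succ_eq_add_one] using hmin)
  have key : ∀ n : ℕ, ((2:ℝ)⁻¹ ^ n : ℝ) ^ (p + 2) = q ^ n := by
    intro n
    rw [← Real.rpow_natCast (2:ℝ)⁻¹ n, ← Real.rpow_mul (by norm_num), mul_comm,
      Real.rpow_mul (by norm_num), Real.rpow_natCast]
  have term_bound : ∀ n : ℕ,
      (∫⁻ w in S n, ENNReal.ofReal (‖w‖ ^ p)) ≤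
        ENNReal.ofReal (Real.pi * (2:ℝ)⁻¹ ^ p * r ^ (p + 2)) * ENNReal.ofReal q ^ n := by
    intro n
    have hmeas : MeasurableSet (S n) :=
      (measurableSet_le measurable_const continuous_norm.measurable).inter
        measurableSet_ball
    have hsn : (0:ℝ) < r * (2:ℝ)⁻¹ ^ n := by positivity
    have step1 : (∫⁻ w in S n, ENNReal.ofReal (‖w‖ ^ p)) ≤
        ENNReal.ofReal ((r * (2:ℝ)⁻¹ ^ (n + 1)) ^ p) * volume (S n) := by
      rw [← setLIntegral_const]
      refine setLIntegral_mono' hmeas fun w hw => ?_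
      refine ENNReal.ofReal_le_ofReal ?_
      exact Real.rpow_le_rpow_of_nonpos (by positivity) hw.1 h0
    have step2 : volume (S n) ≤ ENNReal.ofReal (Real.pi * (r * (2:ℝ)⁻¹ ^ n) ^ 2) := by
      rw [← vol_ball _ hsn.le]
      exact measure_mono inter_subset_right
    calc (∫⁻ w in S n, ENNReal.ofReal (‖w‖ ^ p))
        ≤ ENNReal.ofReal ((r * (2:ℝ)⁻¹ ^ (n + 1)) ^ p) *
            ENNReal.ofReal (Real.pi * (r * (2:ℝ)⁻¹ ^ n) ^ 2) :=
          step1.trans (mul_le_mul_right step2 _)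
      _ = ENNReal.ofReal ((r * (2:ℝ)⁻¹ ^ (n + 1)) ^ p * (Real.pi * (r * (2:ℝ)⁻¹ ^ n) ^ 2)) :=
          (ENNReal.ofReal_mul (Real.rpow_nonneg (by positivity) _)).symm
      _ ≤ ENNReal.ofReal (Real.pi * (2:ℝ)⁻¹ ^ p * r ^ (p + 2)) * ENNReal.ofReal q ^ n := by
          rw [← ENNReal.ofReal_pow hq0, ← ENNReal.ofReal_mul (by positivity)]
          refine ENNReal.ofReal_le_ofReal (le_of_eq ?_)
          have e1 : (r * (2:ℝ)⁻¹ ^ (n + 1)) ^ p = r ^ p * ((2:ℝ)⁻¹ ^ (n + 1) : ℝ) ^ p :=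
            Real.mul_rpow hr.le (by positivity)
          have e2 : ((2:ℝ)⁻¹ ^ (n + 1) : ℝ) ^ p = ((2:ℝ)⁻¹ ^ n : ℝ) ^ p * ((2:ℝ)⁻¹) ^ p := by
            rw [pow_succ, Real.mul_rpow (by positivity) (by norm_num)]
          have e3 : r ^ p * r ^ 2 = r ^ (p + 2) := by
            rw [← Real.rpow_natCast r 2, ← Real.rpow_add hr]; norm_num
          have e4 : ((2:ℝ)⁻¹ ^ n : ℝ) ^ p * ((2:ℝ)⁻¹ ^ n : ℝ) ^ 2 = q ^ n := by
            rw [← key n, ← Real.rpow_natCast ((2:ℝ)⁻¹ ^ n : ℝ) 2,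
              ← Real.rpow_add (by positivity)]; norm_num
          rw [e1, e2, mul_pow, ← e3, ← e4]
          ring
  calc (∫⁻ w in Metric.ball (0:ℂ) r, ENNReal.ofReal (‖w‖ ^ p))
      ≤ ∫⁻ w in ({0} ∪ ⋃ n, S n : Set ℂ), ENNReal.ofReal (‖w‖ ^ p) :=
        lintegral_mono_set cover
    _ ≤ (∫⁻ w in ({0} : Set ℂ), ENNReal.ofReal (‖w‖ ^ p)) +
          ∫⁻ w in (⋃ n, S n : Set ℂ), ENNReal.ofReal (‖w‖ ^ p) :=
        lintegral_union_le _ _ _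
    _ ≤ 0 + ∑' n, ∫⁻ w in S n, ENNReal.ofReal (‖w‖ ^ p) := by
        gcongr
        · refine le_of_eq (setLIntegral_measure_zero _ _ ?_)
          simp
        · exact lintegral_iUnion_le _ _
    _ ≤ 0 + ∑' n, ENNReal.ofReal (Real.pi * (2:ℝ)⁻¹ ^ p * r ^ (p + 2)) * ENNReal.ofReal q ^ n := by
        gcongr with n
        exact term_bound n
    _ = ENNReal.ofReal (Real.pi * (2:ℝ)⁻¹ ^ p * r ^ (p + 2)) * (1 - ENNReal.ofReal q)⁻¹ := by
        rw [zero_add, ENNReal.tsum_mul_left, ENNReal.tsum_geometric]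
    _ = ENNReal.ofReal (Real.pi * (2:ℝ)⁻¹ ^ p) * (1 - ENNReal.ofReal q)⁻¹ *
          ENNReal.ofReal (r ^ (p + 2)) := by
        rw [ENNReal.ofReal_mul (by positivity)]
        ring

lemma lint_outer_rpow {p : ℝ} (hp : p + 2 < 0) :
    ∃ C : ℝ≥0∞, C ≠ ⊤ ∧ ∀ s : ℝ, 0 < s →
      (∫⁻ w in {w : ℂ | s ≤ ‖w‖}, ENNReal.ofReal (‖w‖ ^ p)) ≤
        C * ENNReal.ofReal (s ^ (p + 2)) := by
  set q : ℝ := (2:ℝ) ^ (p + 2) with hq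
  have hq0 : 0 ≤ q := Real.rpow_nonneg (by norm_num) _
  have hq1 : q < 1 := Real.rpow_lt_one_of_one_lt_of_neg (by norm_num) hp
  refine ⟨ENNReal.ofReal (Real.pi * 4) * (1 - ENNReal.ofReal q)⁻¹, ?_, ?_⟩
  · refine ENNReal.mul_ne_top ENNReal.ofReal_ne_top (ENNReal.inv_ne_top.mpr ?_)
    exact (tsub_pos_of_lt (ENNReal.ofReal_lt_one.mpr hq1)).ne'
  intro s hs
  have hp0 : p ≤ 0 := by linarith
  set S : ℕ → Set ℂ := fun n =>
    {w | s * 2 ^ n ≤ ‖w‖} ∩ Metric.ball (0:ℂ) (s * 2 ^ (n + 1)) with hS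
  have cover : {w : ℂ | s ≤ ‖w‖} ⊆ ⋃ n, S n := by
    intro w hw
    have hw' : s ≤ ‖w‖ := hw
    have hex : ∃ n : ℕ, ‖w‖ < s * 2 ^ (n + 1) := by
      obtain ⟨m, hm⟩ := pow_unbounded_of_one_lt (‖w‖ / s) (by norm_num : (1:ℝ) < 2)
      refine ⟨m, ?_⟩
      have := (div_lt_iff₀ hs).mp hm
      have h1 : (2:ℝ) ^ m ≤ 2 ^ (m + 1) := by
        apply pow_le_pow_right₀ (by norm_num); omega
      nlinarith
    refine mem_iUnion.mpr ⟨Nat.find hex, ?_, ?_⟩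
    · rcases Nat.eq_zero_or_pos (Nat.find hex) with h0' | h0'
      · rw [h0']; simpa using hw'
      · obtain ⟨m, hm⟩ := Nat.exists_eq_succ_of_ne_zero h0'.ne'
        have hmin := Nat.find_min hex (show m < Nat.find hex by omega)
        rw [hm]
        exact le_of_not_gt (by simpa [Nat.succ_eq_add_one] using hmin)
    · rw [Metric.mem_ball, Complex.dist_eq, sub_zero]
      exact Nat.find_spec hex
  have key : ∀ n : ℕ, ((2:ℝ) ^ n : ℝ) ^ (p + 2) = q ^ n := by
    intro n
    rw [← Real.rpow_natCast (2:ℝ) n, ← Real.rpow_mul (by norm_num), mul_comm,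
      Real.rpow_mul (by norm_num), Real.rpow_natCast]
  have term_bound : ∀ n : ℕ,
      (∫⁻ w in S n, ENNReal.ofReal (‖w‖ ^ p)) ≤
        ENNReal.ofReal (Real.pi * 4 * s ^ (p + 2)) * ENNReal.ofReal q ^ n := by
    intro n
    have hmeas : MeasurableSet (S n) :=
      (measurableSet_le measurable_const continuous_norm.measurable).inter
        measurableSet_ball
    have hsn : (0:ℝ) < s * 2 ^ n := by positivity
    have step1 : (∫⁻ w in S n, ENNReal.ofReal (‖w‖ ^ p)) ≤
        ENNReal.ofReal ((s * 2 ^ n) ^ p) * volume (S n) := by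
      rw [← setLIntegral_const]
      refine setLIntegral_mono' hmeas fun w hw => ?_
      exact ENNReal.ofReal_le_ofReal (Real.rpow_le_rpow_of_nonpos hsn hw.1 hp0)
    have step2 : volume (S n) ≤ ENNReal.ofReal (Real.pi * (s * 2 ^ (n + 1)) ^ 2) := by
      rw [← vol_ball _ (by positivity)]
      exact measure_mono inter_subset_right
    calc (∫⁻ w in S n, ENNReal.ofReal (‖w‖ ^ p))
        ≤ ENNReal.ofReal ((s * 2 ^ n) ^ p) * ENNReal.ofReal (Real.pi * (s * 2 ^ (n + 1)) ^ 2) :=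
          step1.trans (mul_le_mul_right step2 _)
      _ = ENNReal.ofReal ((s * 2 ^ n) ^ p * (Real.pi * (s * 2 ^ (n + 1)) ^ 2)) :=
          (ENNReal.ofReal_mul (Real.rpow_nonneg (by positivity) _)).symm
      _ ≤ ENNReal.ofReal (Real.pi * 4 * s ^ (p + 2)) * ENNReal.ofReal q ^ n := by
          rw [← ENNReal.ofReal_pow hq0, ← ENNReal.ofReal_mul (by positivity)]
          refine ENNReal.ofReal_le_ofReal (le_of_eq ?_)
          have e1 : (s * (2:ℝ) ^ n) ^ p = s ^ p * ((2:ℝ) ^ n : ℝ) ^ p :=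
            Real.mul_rpow hs.le (by positivity)
          have e3 : s ^ p * s ^ 2 = s ^ (p + 2) := by
            rw [← Real.rpow_natCast s 2, ← Real.rpow_add hs]; norm_num
          have e4 : ((2:ℝ) ^ n : ℝ) ^ p * ((2:ℝ) ^ n : ℝ) ^ 2 = q ^ n := by
            rw [← key n, ← Real.rpow_natCast ((2:ℝ) ^ n : ℝ) 2,
              ← Real.rpow_add (by positivity)]; norm_num
          have e5 : ((2:ℝ)) ^ (n + 1) = 2 ^ n * 2 := pow_succ 2 n
          rw [e1, e5, mul_pow, mul_pow, ← e3, ← e4]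
          ring
  calc (∫⁻ w in {w : ℂ | s ≤ ‖w‖}, ENNReal.ofReal (‖w‖ ^ p))
      ≤ ∫⁻ w in (⋃ n, S n : Set ℂ), ENNReal.ofReal (‖w‖ ^ p) :=
        lintegral_mono_set cover
    _ ≤ ∑' n, ∫⁻ w in S n, ENNReal.ofReal (‖w‖ ^ p) := lintegral_iUnion_le _ _
    _ ≤ ∑' n, ENNReal.ofReal (Real.pi * 4 * s ^ (p + 2)) * ENNReal.ofReal q ^ n := by
        gcongr with n
        exact term_bound n
    _ = ENNReal.ofReal (Real.pi * 4 * s ^ (p + 2)) * (1 - ENNReal.ofReal q)⁻¹ := by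
        rw [ENNReal.tsum_mul_left, ENNReal.tsum_geometric]
    _ = ENNReal.ofReal (Real.pi * 4) * (1 - ENNReal.ofReal q)⁻¹ * ENNReal.ofReal (s ^ (p + 2)) := by
        rw [ENNReal.ofReal_mul (by positivity)]
        ring

lemma lint_shift (z : ℂ) (R : ℝ) (g : ℂ → ℝ≥0∞) :
    (∫⁻ w in Metric.ball z R, g (w - z)) = ∫⁻ w in Metric.ball (0:ℂ) R, g w := by
  rw [← lintegral_indicator measurableSet_ball, ← lintegral_indicator measurableSet_ball]
  rw [← lintegral_add_right_eq_self (fun w => (Metric.ball z R).indicator (fun w => g (w - z)) w) z]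
  congr 1
  funext x
  by_cases hx : x ∈ Metric.ball (0:ℂ) R
  · have hx' : x + z ∈ Metric.ball z R := by
      simpa [Metric.mem_ball, Complex.dist_eq] using hx
    simp [Set.indicator_of_mem hx', Set.indicator_of_mem hx]
  · have hx' : x + z ∉ Metric.ball z R := by
      simpa [Metric.mem_ball, Complex.dist_eq] using hx
    simp [Set.indicator_of_notMem hx', Set.indicator_of_notMem hx]

lemma J_bound {a₀ b : ℝ} (ha2 : -2 < a₀) (ha0 : a₀ ≤ 0) (hb0 : 0 < b) (hb2 : b < 2)
    (hab : a₀ + 2 - b < 0) :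
    ∃ K : ℝ≥0∞, K ≠ ⊤ ∧ ∀ z : ℂ, z ≠ 0 →
      (∫⁻ w in Metric.ball (0:ℂ) 1,
          ENNReal.ofReal (‖w‖ ^ a₀ * ‖w - z‖ ^ (-b))) ≤
        K * ENNReal.ofReal (‖z‖ ^ (a₀ + 2 - b)) := by
  obtain ⟨C₁, hC₁top, hC₁⟩ := lint_ball_rpow ha2 ha0
  obtain ⟨C₂, hC₂top, hC₂⟩ := lint_ball_rpow (p := -b) (by linarith) (by linarith)
  obtain ⟨C₃, hC₃top, hC₃⟩ := lint_outer_rpow (p := a₀ - b) (by linarith)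
  set D : ℝ≥0∞ := C₁ + C₂ + ENNReal.ofReal ((3:ℝ)⁻¹ ^ (-b)) * C₃ with hD
  refine ⟨D * ENNReal.ofReal ((2:ℝ)⁻¹ ^ (a₀ + 2 - b)), ?_, ?_⟩
  · refine ENNReal.mul_ne_top ?_ ENNReal.ofReal_ne_top
    exact ENNReal.add_ne_top.mpr ⟨ENNReal.add_ne_top.mpr ⟨hC₁top, hC₂top⟩,
      ENNReal.mul_ne_top ENNReal.ofReal_ne_top hC₃top⟩
  intro z hz
  set R : ℝ := ‖z‖ / 2 with hR
  have hzpos : 0 < ‖z‖ := norm_pos_iff.mpr hz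
  have hRpos : 0 < R := by positivity
  set f : ℂ → ℝ≥0∞ := fun w =>
    ENNReal.ofReal (‖w‖ ^ a₀ * ‖w - z‖ ^ (-b)) with hf
  have cover : Metric.ball (0:ℂ) 1 ⊆
      Metric.ball (0:ℂ) R ∪ Metric.ball z R ∪
        ({w | R ≤ ‖w‖} ∩ {w | R ≤ ‖w - z‖}) := by
    intro w _
    by_cases h1 : ‖w‖ < R
    · exact Or.inl (Or.inl (by simpa [Metric.mem_ball, Complex.dist_eq] using h1))
    by_cases h2 : ‖w - z‖ < R
    · exact Or.inl (Or.inr (by simpa [Metric.mem_ball, Complex.dist_eq] using h2))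
    exact Or.inr ⟨le_of_not_gt h1, le_of_not_gt h2⟩
  -- region A
  have boundA : (∫⁻ w in Metric.ball (0:ℂ) R, f w) ≤
      C₁ * ENNReal.ofReal (R ^ (a₀ + 2 - b)) := by
    have hAle : (∫⁻ w in Metric.ball (0:ℂ) R, f w) ≤
        ∫⁻ w in Metric.ball (0:ℂ) R,
          ENNReal.ofReal (R ^ (-b)) * ENNReal.ofReal (‖w‖ ^ a₀) := by
      refine setLIntegral_mono' measurableSet_ball fun w hw => ?_
      have hwR : ‖w‖ < R := by simpa [Metric.mem_ball, Complex.dist_eq] using hw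
      have hwz : R ≤ ‖w - z‖ := by
        have t1 : ‖z‖ ≤ ‖w - z‖ + ‖w‖ := by
          have := norm_add_le (z - w) w
          simpa [sub_add_cancel, norm_sub_rev w z] using this
        have : ‖z‖ = 2 * R := by rw [hR]; ring
        nlinarith
      have hle : ‖w - z‖ ^ (-b) ≤ R ^ (-b) :=
        Real.rpow_le_rpow_of_nonpos hRpos hwz (by linarith)
      rw [hf, ← ENNReal.ofReal_mul (Real.rpow_nonneg hRpos.le _)]
      refine ENNReal.ofReal_le_ofReal ?_
      rw [mul_comm (R ^ (-b))]
      exact mul_le_mul_of_nonneg_left hle (Real.rpow_nonneg (norm_nonneg _) _)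
    rw [lintegral_const_mul' _ _ ENNReal.ofReal_ne_top] at hAle
    refine hAle.trans ?_
    calc ENNReal.ofReal (R ^ (-b)) * ∫⁻ w in Metric.ball (0:ℂ) R,
            ENNReal.ofReal (‖w‖ ^ a₀)
        ≤ ENNReal.ofReal (R ^ (-b)) * (C₁ * ENNReal.ofReal (R ^ (a₀ + 2))) :=
          mul_le_mul_right (hC₁ R hRpos) _
      _ = C₁ * ENNReal.ofReal (R ^ (a₀ + 2 - b)) := by
          rw [mul_comm C₁, ← mul_assoc, ← ENNReal.ofReal_mul (Real.rpow_nonneg hRpos.le _),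
            ← Real.rpow_add hRpos, show -b + (a₀ + 2) = a₀ + 2 - b by ring, mul_comm]
  -- region B
  have boundB : (∫⁻ w in Metric.ball z R, f w) ≤
      C₂ * ENNReal.ofReal (R ^ (a₀ + 2 - b)) := by
    have hBle : (∫⁻ w in Metric.ball z R, f w) ≤
        ∫⁻ w in Metric.ball z R,
          ENNReal.ofReal (R ^ a₀) * ENNReal.ofReal (‖w - z‖ ^ (-b)) := by
      refine setLIntegral_mono' measurableSet_ball fun w hw => ?_
      have hwz : ‖w - z‖ < R := by
        simpa [Metric.mem_ball, Complex.dist_eq] using hw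
      have hwR : R ≤ ‖w‖ := by
        have t1 : ‖z‖ ≤ ‖w‖ + ‖w - z‖ := by
          have := norm_add_le w (z - w)
          simpa [add_sub_cancel, norm_sub_rev w z] using this
        have : ‖z‖ = 2 * R := by rw [hR]; ring
        nlinarith
      have hle : ‖w‖ ^ a₀ ≤ R ^ a₀ :=
        Real.rpow_le_rpow_of_nonpos hRpos hwR ha0
      rw [hf, ← ENNReal.ofReal_mul (Real.rpow_nonneg hRpos.le _)]
      exact ENNReal.ofReal_le_ofReal
        (mul_le_mul_of_nonneg_right hle (Real.rpow_nonneg (norm_nonneg _) _))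
    rw [lintegral_const_mul' _ _ ENNReal.ofReal_ne_top] at hBle
    have hshift : (∫⁻ w in Metric.ball z R, ENNReal.ofReal (‖w - z‖ ^ (-b))) =
        ∫⁻ w in Metric.ball (0:ℂ) R, ENNReal.ofReal (‖w‖ ^ (-b)) :=
      lint_shift z R (fun u => ENNReal.ofReal (‖u‖ ^ (-b)))
    rw [hshift] at hBle
    refine hBle.trans ?_
    calc ENNReal.ofReal (R ^ a₀) * ∫⁻ w in Metric.ball (0:ℂ) R,
            ENNReal.ofReal (‖w‖ ^ (-b))
        ≤ ENNReal.ofReal (R ^ a₀) * (C₂ * ENNReal.ofReal (R ^ (-b + 2))) :=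
          mul_le_mul_right (hC₂ R hRpos) _
      _ = C₂ * ENNReal.ofReal (R ^ (a₀ + 2 - b)) := by
          rw [mul_comm C₂, ← mul_assoc, ← ENNReal.ofReal_mul (Real.rpow_nonneg hRpos.le _),
            ← Real.rpow_add hRpos, show a₀ + (-b + 2) = a₀ + 2 - b by ring, mul_comm]
  -- region C
  have boundC : (∫⁻ w in ({w | R ≤ ‖w‖} ∩ {w | R ≤ ‖w - z‖} : Set ℂ), f w) ≤
      ENNReal.ofReal ((3:ℝ)⁻¹ ^ (-b)) * C₃ * ENNReal.ofReal (R ^ (a₀ + 2 - b)) := by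
    have hmeasC : MeasurableSet ({w | R ≤ ‖w‖} ∩ {w | R ≤ ‖w - z‖} : Set ℂ) :=
      (measurableSet_le measurable_const continuous_norm.measurable).inter
        (measurableSet_le measurable_const
          (continuous_norm.comp (continuous_id.sub continuous_const)).measurable)
    have hCle : (∫⁻ w in ({w | R ≤ ‖w‖} ∩ {w | R ≤ ‖w - z‖} : Set ℂ), f w) ≤
        ∫⁻ w in ({w | R ≤ ‖w‖} ∩ {w | R ≤ ‖w - z‖} : Set ℂ),
          ENNReal.ofReal ((3:ℝ)⁻¹ ^ (-b)) * ENNReal.ofReal (‖w‖ ^ (a₀ - b)) := by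
      refine setLIntegral_mono' hmeasC fun w hw => ?_
      obtain ⟨hw1', hw2'⟩ := hw
      have hw1 : R ≤ ‖w‖ := hw1'
      have hw2 : R ≤ ‖w - z‖ := hw2'
      have hwpos : 0 < ‖w‖ := lt_of_lt_of_le hRpos hw1
      have htri : ‖w‖ ≤ 3 * ‖w - z‖ := by
        have t1 : ‖w‖ ≤ ‖w - z‖ + ‖z‖ := by
          have := norm_add_le (w - z) z
          simpa [sub_add_cancel] using this
        have t2 : ‖z‖ ≤ 2 * ‖w - z‖ := by
          have hzR : ‖z‖ = 2 * R := by rw [hR]; ring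
          linarith
        linarith
      have hle : ‖w - z‖ ^ (-b) ≤ (‖w‖ * 3⁻¹) ^ (-b) := by
        refine Real.rpow_le_rpow_of_nonpos (by positivity) ?_ (by linarith)
        nlinarith
      have heq : (‖w‖ * 3⁻¹) ^ (-b) = (3:ℝ)⁻¹ ^ (-b) * ‖w‖ ^ (-b) := by
        rw [Real.mul_rpow (norm_nonneg _) (by norm_num)]; ring
      rw [hf, ← ENNReal.ofReal_mul (Real.rpow_nonneg (by norm_num) _)]
      refine ENNReal.ofReal_le_ofReal ?_
      calc ‖w‖ ^ a₀ * ‖w - z‖ ^ (-b)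
          ≤ ‖w‖ ^ a₀ * ((3:ℝ)⁻¹ ^ (-b) * ‖w‖ ^ (-b)) := by
            rw [← heq]
            exact mul_le_mul_of_nonneg_left hle (Real.rpow_nonneg (norm_nonneg _) _)
        _ = (3:ℝ)⁻¹ ^ (-b) * ‖w‖ ^ (a₀ - b) := by
            rw [show a₀ - b = a₀ + (-b) by ring, Real.rpow_add hwpos]
            ring
    rw [lintegral_const_mul' _ _ ENNReal.ofReal_ne_top] at hCle
    refine hCle.trans ?_
    rw [mul_assoc]
    refine mul_le_mul_right ?_ _
    calc (∫⁻ w in ({w | R ≤ ‖w‖} ∩ {w | R ≤ ‖w - z‖} : Set ℂ),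
            ENNReal.ofReal (‖w‖ ^ (a₀ - b)))
        ≤ ∫⁻ w in ({w | R ≤ ‖w‖} : Set ℂ),
            ENNReal.ofReal (‖w‖ ^ (a₀ - b)) := lintegral_mono_set inter_subset_left
      _ ≤ C₃ * ENNReal.ofReal (R ^ (a₀ - b + 2)) := hC₃ R hRpos
      _ = C₃ * ENNReal.ofReal (R ^ (a₀ + 2 - b)) := by rw [show a₀ - b + 2 = a₀ + 2 - b by ring]
  calc (∫⁻ w in Metric.ball (0:ℂ) 1, f w)
      ≤ ∫⁻ w in (Metric.ball (0:ℂ) R ∪ Metric.ball z R ∪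
          ({w | R ≤ ‖w‖} ∩ {w | R ≤ ‖w - z‖}) : Set ℂ), f w :=
        lintegral_mono_set cover
    _ ≤ (∫⁻ w in (Metric.ball (0:ℂ) R ∪ Metric.ball z R : Set ℂ), f w) +
          ∫⁻ w in ({w | R ≤ ‖w‖} ∩ {w | R ≤ ‖w - z‖} : Set ℂ), f w :=
        lintegral_union_le _ _ _
    _ ≤ ((∫⁻ w in Metric.ball (0:ℂ) R, f w) + ∫⁻ w in Metric.ball z R, f w) +
          ∫⁻ w in ({w | R ≤ ‖w‖} ∩ {w | R ≤ ‖w - z‖} : Set ℂ), f w := by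
        gcongr
        exact lintegral_union_le _ _ _
    _ ≤ (C₁ * ENNReal.ofReal (R ^ (a₀ + 2 - b)) + C₂ * ENNReal.ofReal (R ^ (a₀ + 2 - b))) +
          ENNReal.ofReal ((3:ℝ)⁻¹ ^ (-b)) * C₃ * ENNReal.ofReal (R ^ (a₀ + 2 - b)) :=
        add_le_add (add_le_add boundA boundB) boundC
    _ = D * ENNReal.ofReal (R ^ (a₀ + 2 - b)) := by rw [hD]; ring
    _ = D * ENNReal.ofReal ((2:ℝ)⁻¹ ^ (a₀ + 2 - b)) *
          ENNReal.ofReal (‖z‖ ^ (a₀ + 2 - b)) := by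
        rw [hR, div_eq_mul_inv, Real.mul_rpow (norm_nonneg _) (by norm_num),
          ENNReal.ofReal_mul (Real.rpow_nonneg (norm_nonneg _) _)]
        ring

noncomputable def unitDisc : Set ℂ := {w : ℂ | ‖w‖ < 1}

theorem stmt9 (γ : ℝ) (hγ0 : 0 < γ) (hγ2 : γ < Real.sqrt 2)
    (α : ℝ) (hα : α < -γ / 2) :
    IntegrableOn (fun p : ℂ × ℂ =>
        ‖p.1‖ ^ (-(γ * α) - 2) * ‖p.2‖ ^ (-(γ * α) - 2) *
          ‖p.1 - p.2‖ ^ (-(γ ^ 2)))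
      (unitDisc ×ˢ unitDisc) volume := by
  have hb2' : γ ^ 2 < 2 := by
    have := (Real.lt_sqrt hγ0.le).mp hγ2; linarith
  set a : ℝ := -(γ * α) - 2 with ha_def
  set b : ℝ := γ ^ 2 with hb_def
  have hb0 : 0 < b := by rw [hb_def]; positivity
  have hb2 : b < 2 := hb2'
  have hA : b / 2 - 2 < a := by
    have : γ * α < γ * (-γ / 2) := mul_lt_mul_of_pos_left hα hγ0
    rw [ha_def, hb_def]; nlinarith
  set a₀ : ℝ := min a (3 * b / 4 - 2) with ha₀_def
  have ha₀a : a₀ ≤ a := min_le_left _ _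
  have ha₀le : a₀ ≤ 3 * b / 4 - 2 := min_le_right _ _
  have ha₀half : b / 2 - 2 < a₀ := lt_min hA (by nlinarith)
  have ha₀2 : -2 < a₀ := by nlinarith
  have ha₀0 : a₀ ≤ 0 := by nlinarith
  have hab : a₀ + 2 - b < 0 := by nlinarith
  set qq : ℝ := 2 * a₀ + 2 - b with hqq_def
  have hq2 : -2 < qq := by rw [hqq_def]; nlinarith
  have hq0 : qq ≤ 0 := by rw [hqq_def]; nlinarith
  have hD : unitDisc = Metric.ball (0:ℂ) 1 := by
    ext w; simp [unitDisc, Metric.mem_ball, Complex.dist_eq]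
  have hDmeas : MeasurableSet unitDisc := by rw [hD]; exact measurableSet_ball
  obtain ⟨K, hKtop, hK⟩ := J_bound ha₀2 ha₀0 hb0 hb2 hab
  obtain ⟨C, hCtop, hC⟩ := lint_ball_rpow hq2 hq0
  have m1 : Measurable fun p : ℂ × ℂ => ‖p.1‖ ^ a :=
    (measurable_abs_rpow a).comp measurable_fst
  have m2 : Measurable fun p : ℂ × ℂ => ‖p.2‖ ^ a :=
    (measurable_abs_rpow a).comp measurable_snd
  have m3 : Measurable fun p : ℂ × ℂ => ‖p.1 - p.2‖ ^ (-b) :=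
    (measurable_abs_rpow (-b)).comp (measurable_fst.sub measurable_snd)
  have hFmeas : Measurable fun p : ℂ × ℂ =>
      ‖p.1‖ ^ a * ‖p.2‖ ^ a * ‖p.1 - p.2‖ ^ (-b) :=
    (m1.mul m2).mul m3
  have hae0 : ∀ᵐ x ∂(volume.restrict unitDisc), x ≠ (0:ℂ) :=
    ae_restrict_of_ae (by simp [ae_iff])
  refine ⟨hFmeas.aestronglyMeasurable, ?_⟩
  rw [hasFiniteIntegral_iff_ofReal (ae_of_all _ fun p => by positivity)]
  have hres : (volume : Measure (ℂ × ℂ)).restrict (unitDisc ×ˢ unitDisc)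
      = (volume.restrict unitDisc).prod (volume.restrict unitDisc) := by
    rw [Measure.volume_eq_prod, Measure.prod_restrict]
  have hGmeas : Measurable fun z : ℂ × ℂ => ENNReal.ofReal
      (‖z.1‖ ^ a * ‖z.2‖ ^ a * ‖z.1 - z.2‖ ^ (-b)) :=
    ENNReal.measurable_ofReal.comp hFmeas
  rw [hres, lintegral_prod _ hGmeas.aemeasurable]
  have inner_ae : ∀ᵐ x ∂(volume.restrict unitDisc),
      (∫⁻ y, ENNReal.ofReal
          (‖x‖ ^ a * ‖y‖ ^ a * ‖x - y‖ ^ (-b))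
        ∂(volume.restrict unitDisc)) ≤ K * ENNReal.ofReal (‖x‖ ^ qq) := by
    filter_upwards [ae_restrict_mem hDmeas, hae0] with x hxD hx0
    have hx1 : ‖x‖ < 1 := hxD
    have hxpos : 0 < ‖x‖ := norm_pos_iff.mpr hx0
    calc (∫⁻ y, ENNReal.ofReal
            (‖x‖ ^ a * ‖y‖ ^ a * ‖x - y‖ ^ (-b))
          ∂(volume.restrict unitDisc))
        ≤ ∫⁻ y, ENNReal.ofReal (‖x‖ ^ a₀) *
            ENNReal.ofReal (‖y‖ ^ a₀ * ‖y - x‖ ^ (-b))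
          ∂(volume.restrict unitDisc) := by
          refine lintegral_mono_ae ?_
          filter_upwards [ae_restrict_mem hDmeas, hae0] with y hyD hy0
          have hy1 : ‖y‖ < 1 := hyD
          have hypos : 0 < ‖y‖ := norm_pos_iff.mpr hy0
          rw [← ENNReal.ofReal_mul (Real.rpow_nonneg (norm_nonneg _) _)]
          refine ENNReal.ofReal_le_ofReal ?_
          have h1 : ‖x‖ ^ a ≤ ‖x‖ ^ a₀ :=
            Real.rpow_le_rpow_of_exponent_ge hxpos hx1.le ha₀a
          have h2 : ‖y‖ ^ a ≤ ‖y‖ ^ a₀ :=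
            Real.rpow_le_rpow_of_exponent_ge hypos hy1.le ha₀a
          have h3 : ‖x‖ ^ a * ‖y‖ ^ a ≤
              ‖x‖ ^ a₀ * ‖y‖ ^ a₀ :=
            mul_le_mul h1 h2 (Real.rpow_nonneg (norm_nonneg _) _)
              (Real.rpow_nonneg (norm_nonneg _) _)
          have e : ‖x - y‖ = ‖y - x‖ := norm_sub_rev x y
          rw [e, ← mul_assoc]
          exact mul_le_mul_of_nonneg_right h3 (Real.rpow_nonneg (norm_nonneg _) _)
      _ = ENNReal.ofReal (‖x‖ ^ a₀) *
            ∫⁻ y in unitDisc, ENNReal.ofReal (‖y‖ ^ a₀ * ‖y - x‖ ^ (-b)) :=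
          lintegral_const_mul' _ _ ENNReal.ofReal_ne_top
      _ ≤ ENNReal.ofReal (‖x‖ ^ a₀) *
            (K * ENNReal.ofReal (‖x‖ ^ (a₀ + 2 - b))) := by
          refine mul_le_mul_right ?_ _
          rw [hD]
          exact hK x hx0
      _ = K * ENNReal.ofReal (‖x‖ ^ qq) := by
          rw [mul_comm (ENNReal.ofReal (‖x‖ ^ a₀)), mul_assoc,
            ← ENNReal.ofReal_mul (Real.rpow_nonneg (norm_nonneg _) _),
            ← Real.rpow_add hxpos, show a₀ + 2 - b + a₀ = qq by rw [hqq_def]; ring]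
  calc (∫⁻ x, (∫⁻ y, ENNReal.ofReal
          (‖x‖ ^ a * ‖y‖ ^ a * ‖x - y‖ ^ (-b))
        ∂(volume.restrict unitDisc)) ∂(volume.restrict unitDisc))
      ≤ ∫⁻ x, K * ENNReal.ofReal (‖x‖ ^ qq) ∂(volume.restrict unitDisc) :=
        lintegral_mono_ae inner_ae
    _ = K * ∫⁻ x in unitDisc, ENNReal.ofReal (‖x‖ ^ qq) :=
        lintegral_const_mul' _ _ hKtop
    _ ≤ K * (C * ENNReal.ofReal ((1:ℝ) ^ (qq + 2))) := by
        refine mul_le_mul_right ?_ _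
        rw [hD]
        exact hC 1 one_pos
    _ < ⊤ := ENNReal.mul_lt_top hKtop.lt_top
        (ENNReal.mul_lt_top hCtop.lt_top ENNReal.ofReal_lt_top)
end

section
/- Let γ ∈ (0, √2) and let α be real with α < −1/γ. Then the integral ∫_{𝔻²} |w₁|^{−γα−3} |w₂|^{−γα−1} |w₁−w₂|^{−γ²} |dw₁|² |dw₂|² is finite; in particular the integral J₂(α) defining the Dotsenko–Fateev type integral with singular weights 1/(w₁·conj(w₁)²·conj(w₂)) converges absolutely on the half-plane {Re α < −1/γ}. -/
open MeasureTheory Set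

noncomputable def J2integrand (γ : ℝ) (α : ℂ) (p : ℂ × ℂ) : ℂ :=
  ((‖p.1‖ : ℂ) ^ (-((γ : ℂ) * α))) *
    ((‖p.2‖ : ℂ) ^ (-((γ : ℂ) * α))) *
    (((‖p.1 - p.2‖) ^ (-(γ ^ 2)) : ℝ) : ℂ) *
    (((starRingEnd ℂ) p.2 - (starRingEnd ℂ) p.1) / (p.2 - p.1)) *
    (1 / (p.1 * ((starRingEnd ℂ) p.1) ^ 2 * (starRingEnd ℂ) p.2))

open Filter Module ENNReal

lemma unitDisc_eq : unitDisc = Metric.ball 0 1 := by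
  ext z; simp [unitDisc, Metric.mem_ball, Complex.dist_eq]


lemma ballInt {s : ℝ} (hs : -2 < s) {R : ℝ} (hR : 0 < R) :
    IntegrableOn (fun z : ℂ => ‖z‖ ^ s) (Metric.ball 0 R) volume := by
  have hmeas : Measurable (fun z : ℂ => ‖z‖ ^ s) := by
    have h1 : Measurable fun x : ℝ => x ^ s := by measurability
    exact h1.comp continuous_norm.measurable
  rcases le_or_gt 0 s with h0 | h0
  · apply Measure.integrableOn_of_bounded measure_ball_lt_top.ne
      hmeas.aestronglyMeasurable (M := R ^ s)
    filter_upwards [ae_restrict_mem measurableSet_ball] with z hz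
    rw [Real.norm_of_nonneg (Real.rpow_nonneg (norm_nonneg z) s)]
    refine Real.rpow_le_rpow (norm_nonneg z) ?_ h0
    rw [Metric.mem_ball, Complex.dist_eq, sub_zero] at hz
    exact hz.le
  · constructor
    · exact hmeas.aestronglyMeasurable
    · rw [hasFiniteIntegral_iff_ofReal
        (Eventually.of_forall fun z => Real.rpow_nonneg (norm_nonneg z) s)]
      set μ := volume.restrict (Metric.ball (0:ℂ) R) with hμ
      rw [lintegral_eq_lintegral_meas_le μ
        (Eventually.of_forall fun z => Real.rpow_nonneg (norm_nonneg z) s)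
        hmeas.aemeasurable]
      set f := fun t : ℝ => μ {a : ℂ | t ≤ ‖a‖ ^ s} with hf
      have key : ∀ t ∈ Ioi (1:ℝ), f t ≤
          ENNReal.ofReal (t ^ (s⁻¹ * 2)) * volume (Metric.ball (0:ℂ) 1) := by
        intro t ht
        have ht0 : (0:ℝ) < t := lt_trans one_pos ht
        have hsub : {a : ℂ | t ≤ ‖a‖ ^ s} ⊆ Metric.closedBall 0 (t ^ s⁻¹) := by
          intro a ha
          simp only [mem_setOf_eq] at ha
          simp only [Metric.mem_closedBall, Complex.dist_eq, sub_zero]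
          rcases eq_or_ne a 0 with rfl | ha0
          · simpa using (Real.rpow_pos_of_pos ht0 s⁻¹).le
          · exact (Real.le_rpow_inv_iff_of_neg (norm_pos_iff.mpr ha0) ht0 h0).mpr ha
        calc f t ≤ volume {a : ℂ | t ≤ ‖a‖ ^ s} := Measure.restrict_le_self _
          _ ≤ volume (Metric.closedBall (0:ℂ) (t ^ s⁻¹)) := measure_mono hsub
          _ = ENNReal.ofReal ((t ^ s⁻¹) ^ finrank ℝ ℂ) * volume (Metric.ball (0:ℂ) 1) :=
              Measure.addHaar_closedBall _ _ (Real.rpow_nonneg ht0.le _)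
          _ = ENNReal.ofReal (t ^ (s⁻¹ * 2)) * volume (Metric.ball (0:ℂ) 1) := by
              rw [Complex.finrank_real_complex, ← Real.rpow_natCast (t ^ s⁻¹) 2,
                ← Real.rpow_mul ht0.le]
              norm_num
      have h1 : (∫⁻ t in Ioc (0:ℝ) 1, f t) < ⊤ := by
        have hb : ∀ t : ℝ, f t ≤ volume (Metric.ball (0:ℂ) R) := by
          intro t
          calc f t ≤ μ univ := measure_mono (subset_univ _)
            _ = volume (Metric.ball (0:ℂ) R) := by rw [hμ, Measure.restrict_apply_univ]
        calc (∫⁻ t in Ioc (0:ℝ) 1, f t)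
            ≤ ∫⁻ _ in Ioc (0:ℝ) 1, volume (Metric.ball (0:ℂ) R) := lintegral_mono fun t => hb t
          _ = volume (Metric.ball (0:ℂ) R) * volume (Ioc (0:ℝ) 1) := by
              rw [lintegral_const, Measure.restrict_apply_univ]
          _ < ⊤ := by
              apply ENNReal.mul_lt_top measure_ball_lt_top
              simp [Real.volume_Ioc]
      have h2 : (∫⁻ t in Ioi (1:ℝ), f t) < ⊤ := by
        have hq : s⁻¹ * 2 < -1 := by
          rw [inv_mul_eq_div, div_lt_iff_of_neg h0]
          linarith
        calc (∫⁻ t in Ioi (1:ℝ), f t)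
            ≤ ∫⁻ t in Ioi (1:ℝ), ENNReal.ofReal (t ^ (s⁻¹*2)) * volume (Metric.ball (0:ℂ) 1) :=
              setLIntegral_mono' measurableSet_Ioi key
          _ = (∫⁻ t in Ioi (1:ℝ), ENNReal.ofReal (t ^ (s⁻¹*2))) * volume (Metric.ball (0:ℂ) 1) := by
              rw [lintegral_mul_const' _ _ measure_ball_lt_top.ne]
          _ < ⊤ := ENNReal.mul_lt_top
              ((integrableOn_Ioi_rpow_of_lt hq one_pos).setLIntegral_lt_top)
              measure_ball_lt_top
      calc ∫⁻ t in Ioi 0, f t ≤ ∫⁻ t in Ioc 0 1 ∪ Ioi 1, f t :=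
            lintegral_mono_set Ioi_subset_Ioc_union_Ioi
        _ ≤ (∫⁻ t in Ioc 0 1, f t) + ∫⁻ t in Ioi 1, f t := lintegral_union_le _ _ _
        _ < ⊤ := ENNReal.add_lt_top.2 ⟨h1, h2⟩


lemma mainInt (γ : ℝ) (hγ0 : 0 < γ) (hγ2 : γ < Real.sqrt 2)
    (α : ℝ) (hα : α < -1 / γ) :
    IntegrableOn (fun p : ℂ × ℂ =>
        ‖p.1‖ ^ (-(γ * α) - 3) * ‖p.2‖ ^ (-(γ * α) - 1) *
          ‖p.1 - p.2‖ ^ (-(γ ^ 2)))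
      (unitDisc ×ˢ unitDisc) volume := by
  have hx : 1 < -(γ * α) := by
    have h := mul_lt_mul_of_pos_left hα hγ0
    have h2 : γ * (-1 / γ) = -1 := by field_simp
    linarith
  have ha : -2 < -(γ * α) - 3 := by linarith
  have hb : 0 < -(γ * α) - 1 := by linarith
  have hc : -2 < -(γ ^ 2) := by
    have := (Real.lt_sqrt hγ0.le).mp hγ2
    linarith
  set a := -(γ * α) - 3 with h_a
  set g : ℂ → ℝ := (Metric.ball (0:ℂ) 1).indicator (fun z => ‖z‖ ^ a) with hgdef
  set h : ℂ → ℝ := (Metric.ball (0:ℂ) 2).indicator (fun z => ‖z‖ ^ (-(γ^2))) with hhdef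
  have hg : Integrable g volume := (ballInt ha one_pos).integrable_indicator Metric.isOpen_ball.measurableSet
  have hh : Integrable h volume := (ballInt hc two_pos).integrable_indicator Metric.isOpen_ball.measurableSet
  have hgh : Integrable (fun q : ℂ × ℂ => g q.1 * h q.2) (volume.prod volume) := hg.mul_prod hh
  have hT : MeasurePreserving (fun z : ℂ × ℂ => (z.1, z.2 - z.1))
      ((volume : Measure ℂ).prod volume) ((volume : Measure ℂ).prod volume) :=
    measurePreserving_prod_sub volume volume
  have hcomp : Integrable (fun q : ℂ × ℂ => g q.1 * h (q.2 - q.1)) volume := by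
    rw [show (volume : Measure (ℂ × ℂ)) = (volume : Measure ℂ).prod volume from Measure.volume_eq_prod ℂ ℂ]
    exact (hT.integrable_comp hgh.aestronglyMeasurable).mpr hgh
  have hmeasF : Measurable (fun p : ℂ × ℂ =>
      ‖p.1‖ ^ (-(γ * α) - 3) * ‖p.2‖ ^ (-(γ * α) - 1) *
        ‖p.1 - p.2‖ ^ (-(γ ^ 2))) := by
    have hr : ∀ s : ℝ, Measurable fun x : ℝ => x ^ s := fun s => by measurability
    exact (((hr _).comp (continuous_norm.measurable.comp measurable_fst)).mul
      ((hr _).comp (continuous_norm.measurable.comp measurable_snd))).mul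
      ((hr _).comp (continuous_norm.measurable.comp (measurable_fst.sub measurable_snd)))
  have hset : MeasurableSet (unitDisc ×ˢ unitDisc) := by
    rw [unitDisc_eq]
    exact Metric.isOpen_ball.measurableSet.prod Metric.isOpen_ball.measurableSet
  refine Integrable.mono' hcomp.integrableOn hmeasF.aestronglyMeasurable ?_
  rw [ae_restrict_iff' hset]
  refine Eventually.of_forall ?_
  rintro ⟨p1, p2⟩ ⟨hp1, hp2⟩
  rw [unitDisc_eq] at hp1 hp2
  rw [Metric.mem_ball, Complex.dist_eq, sub_zero] at hp1 hp2
  simp only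
  have h12 : p2 - p1 ∈ Metric.ball (0:ℂ) 2 := by
    rw [Metric.mem_ball, Complex.dist_eq, sub_zero]
    have ht := norm_sub_le p2 p1
    linarith
  have hgv : g p1 = ‖p1‖ ^ a := by
    rw [hgdef, indicator_of_mem (by rw [Metric.mem_ball, Complex.dist_eq, sub_zero]; exact hp1)]
  have hhv : h (p2 - p1) = ‖p1 - p2‖ ^ (-(γ^2)) := by
    rw [hhdef, indicator_of_mem h12, norm_sub_rev]
  have hnn : 0 ≤ ‖p1‖ ^ (-(γ * α) - 3) * ‖p2‖ ^ (-(γ * α) - 1) *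
      ‖p1 - p2‖ ^ (-(γ ^ 2)) := by positivity
  rw [Real.norm_of_nonneg hnn, hgv, hhv]
  have h2le : ‖p2‖ ^ (-(γ * α) - 1) ≤ 1 :=
    Real.rpow_le_one (norm_nonneg _) hp2.le hb.le
  calc ‖p1‖ ^ a * ‖p2‖ ^ (-(γ * α) - 1) * ‖p1 - p2‖ ^ (-(γ ^ 2))
      = (‖p1‖ ^ a * ‖p1 - p2‖ ^ (-(γ ^ 2))) *
        ‖p2‖ ^ (-(γ * α) - 1) := by ring
    _ ≤ (‖p1‖ ^ a * ‖p1 - p2‖ ^ (-(γ ^ 2))) * 1 := by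
        refine mul_le_mul_of_nonneg_left h2le (by positivity)
    _ = ‖p1‖ ^ a * ‖p1 - p2‖ ^ (-(γ ^ 2)) := by ring


-- norm bound, pointwise
lemma J2bound (γ : ℝ) (β : ℂ) (p : ℂ × ℂ) :
    ‖J2integrand γ β p‖ ≤
      ‖p.1‖ ^ (-(γ * β.re) - 3) * ‖p.2‖ ^ (-(γ * β.re) - 1) *
        ‖p.1 - p.2‖ ^ (-(γ ^ 2)) := by
  obtain ⟨p1, p2⟩ := p
  rcases eq_or_ne p1 0 with rfl | h1
  · simp [J2integrand]
    positivity
  rcases eq_or_ne p2 0 with rfl | h2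
  · simp [J2integrand]
    positivity
  have r1 : 0 < ‖p1‖ := norm_pos_iff.mpr h1
  have r2 : 0 < ‖p2‖ := norm_pos_iff.mpr h2
  have hre : (-((γ:ℂ) * β)).re = -(γ * β.re) := by simp
  have n1 : ‖((‖p1‖ : ℂ) ^ (-((γ:ℂ) * β)))‖ = ‖p1‖ ^ (-(γ * β.re)) := by
    rw [Complex.norm_cpow_eq_rpow_re_of_pos r1, hre]
  have n2 : ‖((‖p2‖ : ℂ) ^ (-((γ:ℂ) * β)))‖ = ‖p2‖ ^ (-(γ * β.re)) := by
    rw [Complex.norm_cpow_eq_rpow_re_of_pos r2, hre]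
  have n3 : ‖(((‖p1 - p2‖) ^ (-(γ ^ 2)) : ℝ) : ℂ)‖ =
      ‖p1 - p2‖ ^ (-(γ ^ 2)) := by
    rw [Complex.norm_real,
      Real.norm_of_nonneg (Real.rpow_nonneg (norm_nonneg _) _)]
  have n4 : ‖((starRingEnd ℂ) p2 - (starRingEnd ℂ) p1) / (p2 - p1)‖ ≤ 1 := by
    rcases eq_or_ne p2 p1 with rfl | h12
    · simp
    · rw [norm_div, ← map_sub, Complex.norm_conj,
        div_self (norm_ne_zero_iff.mpr (sub_ne_zero.mpr h12))]
  have n5 : ‖(1 / (p1 * ((starRingEnd ℂ) p1) ^ 2 * (starRingEnd ℂ) p2))‖ =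
      (‖p1‖ ^ 3 * ‖p2‖)⁻¹ := by
    rw [one_div, norm_inv, norm_mul, norm_mul, norm_pow, Complex.norm_conj,
      Complex.norm_conj]
    ring_nf
  have e1 : ‖p1‖ ^ (-(γ * β.re) - 3) =
      ‖p1‖ ^ (-(γ * β.re)) * (‖p1‖ ^ (3:ℕ))⁻¹ := by
    rw [Real.rpow_sub r1, show ((3:ℝ)) = ((3:ℕ):ℝ) by norm_num, Real.rpow_natCast,
      div_eq_mul_inv]
  have e2 : ‖p2‖ ^ (-(γ * β.re) - 1) =
      ‖p2‖ ^ (-(γ * β.re)) * (‖p2‖)⁻¹ := by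
    rw [Real.rpow_sub r2, Real.rpow_one, div_eq_mul_inv]
  rw [J2integrand]
  simp only [norm_mul]
  rw [n1, n2, n3, n5, e1, e2]
  have hC : 0 ≤ ‖p1‖ ^ (-(γ * β.re)) * ‖p2‖ ^ (-(γ * β.re)) *
      ‖p1 - p2‖ ^ (-(γ ^ 2)) * (‖p1‖ ^ 3 * ‖p2‖)⁻¹ := by
    positivity
  calc ‖p1‖ ^ (-(γ * β.re)) * ‖p2‖ ^ (-(γ * β.re)) *
        ‖p1 - p2‖ ^ (-(γ ^ 2)) *
        ‖((starRingEnd ℂ) p2 - (starRingEnd ℂ) p1) / (p2 - p1)‖ *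
        (‖p1‖ ^ 3 * ‖p2‖)⁻¹
      = (‖p1‖ ^ (-(γ * β.re)) * ‖p2‖ ^ (-(γ * β.re)) *
        ‖p1 - p2‖ ^ (-(γ ^ 2)) * (‖p1‖ ^ 3 * ‖p2‖)⁻¹) *
        ‖((starRingEnd ℂ) p2 - (starRingEnd ℂ) p1) / (p2 - p1)‖ := by ring
    _ ≤ (‖p1‖ ^ (-(γ * β.re)) * ‖p2‖ ^ (-(γ * β.re)) *
        ‖p1 - p2‖ ^ (-(γ ^ 2)) * (‖p1‖ ^ 3 * ‖p2‖)⁻¹) * 1 :=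
        mul_le_mul_of_nonneg_left n4 hC
    _ = ‖p1‖ ^ (-(γ * β.re)) * (‖p1‖ ^ (3:ℕ))⁻¹ *
        (‖p2‖ ^ (-(γ * β.re)) * (‖p2‖)⁻¹) *
        ‖p1 - p2‖ ^ (-(γ ^ 2)) := by
      rw [mul_inv]
      ring


lemma J2meas (γ : ℝ) (β : ℂ) : Measurable (J2integrand γ β) := by
  have habs : Measurable (fun z : ℂ => ‖z‖) := continuous_norm.measurable
  have hofR : Measurable (Complex.ofReal : ℝ → ℂ) := Complex.continuous_ofReal.measurable
  have hconj : Measurable (starRingEnd ℂ) := Complex.continuous_conj.measurable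
  have hcpow : Measurable fun w : ℂ => w ^ (-((γ:ℂ) * β)) := by measurability
  have hrpow : Measurable fun x : ℝ => x ^ (-(γ^2)) := by measurability
  unfold J2integrand
  apply Measurable.mul
  apply Measurable.mul
  apply Measurable.mul
  apply Measurable.mul
  · exact hcpow.comp (hofR.comp (habs.comp measurable_fst))
  · exact hcpow.comp (hofR.comp (habs.comp measurable_snd))
  · exact hofR.comp (hrpow.comp (habs.comp (measurable_fst.sub measurable_snd)))
  · exact ((hconj.comp measurable_snd).sub (hconj.comp measurable_fst)).div
      (measurable_snd.sub measurable_fst)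
  · exact measurable_const.div
      (((measurable_fst.mul ((hconj.comp measurable_fst).pow measurable_const)).mul
        (hconj.comp measurable_snd)))


theorem stmt10 (γ : ℝ) (hγ0 : 0 < γ) (hγ2 : γ < Real.sqrt 2)
    (α : ℝ) (hα : α < -1 / γ) :
    IntegrableOn (fun p : ℂ × ℂ =>
        ‖p.1‖ ^ (-(γ * α) - 3) * ‖p.2‖ ^ (-(γ * α) - 1) *
          ‖p.1 - p.2‖ ^ (-(γ ^ 2)))
      (unitDisc ×ˢ unitDisc) volume ∧
    ∀ β : ℂ, β.re < -1 / γ →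
      IntegrableOn (J2integrand γ β) (unitDisc ×ˢ unitDisc) volume := by
  refine ⟨mainInt γ hγ0 hγ2 α hα, ?_⟩
  intro β hβ
  have hG := mainInt γ hγ0 hγ2 β.re hβ
  refine Integrable.mono' hG ((J2meas γ β).aestronglyMeasurable) ?_
  exact Eventually.of_forall fun p => J2bound γ β p
end

section
/- Let a, b, c be real numbers with a > 0, b > 0 and c > −min{1/2, a, b}. Then the Selberg integral S_{2,2}(a,b,c) := ∫_{0}^{1} ∫_{0}^{1} t₁^{a−1} t₂^{a−1} (1−t₁)^{b−1} (1−t₂)^{b−1} |t₂−t₁|^{2c} dt₁ dt₂ is finite. -/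
open MeasureTheory Set Real

noncomputable def del (u : ℝ) : ℝ := min u (1 - u) / 2


lemma measurable_del : Measurable del := by unfold del; fun_prop


lemma intervalIntegrable_abs_rpow {r : ℝ} (hr : -1 < r) (u A B : ℝ) :
    IntervalIntegrable (fun v : ℝ => |v - u| ^ r) volume A B := by
  suffices H : ∀ C : ℝ, IntervalIntegrable (fun v : ℝ => |v - u| ^ r) volume u C by
    exact (H A).symm.trans (H B)
  intro C
  rcases le_total u C with h | h
  · rw [intervalIntegrable_iff, uIoc_of_le h]
    have h1 : IntervalIntegrable (fun x : ℝ => (x - u) ^ r) volume (0 + u) ((C - u) + u) :=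
      (intervalIntegral.intervalIntegrable_rpow' hr).comp_sub_right u
    rw [zero_add, sub_add_cancel] at h1
    rw [intervalIntegrable_iff, uIoc_of_le h] at h1
    refine h1.congr_fun (fun v hv => ?_) measurableSet_Ioc
    rw [abs_of_pos (by linarith [hv.1] : (0:ℝ) < v - u)]
  · rw [intervalIntegrable_iff, uIoc_comm, uIoc_of_le h]
    have h1 : IntervalIntegrable (fun x : ℝ => (u - x) ^ r) volume (u - 0) (u - (u - C)) :=
      (intervalIntegral.intervalIntegrable_rpow' hr).comp_sub_left u
    rw [sub_zero, sub_sub_cancel] at h1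
    rw [intervalIntegrable_iff, uIoc_comm, uIoc_of_le h] at h1
    refine h1.congr_fun (fun v hv => ?_) measurableSet_Ioc
    rw [abs_sub_comm, abs_of_nonneg (by linarith [hv.2] : (0:ℝ) ≤ u - v)]


lemma integral_abs_rpow {r : ℝ} (hr : -1 < r) (u δ : ℝ) (hδ : 0 ≤ δ) :
    ∫ v in Ioo (u - δ) (u + δ), |v - u| ^ r = 2 * (δ ^ (r + 1) / (r + 1)) := by
  have hr1 : r + 1 ≠ 0 := by linarith
  rw [← integral_Ioc_eq_integral_Ioo, ← intervalIntegral.integral_of_le (by linarith)]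
  have key : ∀ s : ℝ, 0 ≤ s → (∫ x in (0:ℝ)..s, x ^ r) = s ^ (r+1) / (r+1) := by
    intro s hs
    rw [integral_rpow (Or.inl hr), Real.zero_rpow hr1, sub_zero]
  have h2 : (∫ v in u..(u + δ), |v - u| ^ r) = δ ^ (r+1) / (r+1) := by
    have e1 : (∫ v in u..(u + δ), |v - u| ^ r) = ∫ v in u..(u + δ), (v - u) ^ r := by
      refine intervalIntegral.integral_congr (fun v hv => ?_)
      rw [uIcc_of_le (by linarith)] at hv
      rw [abs_of_nonneg (by linarith [hv.1] : (0:ℝ) ≤ v - u)]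
    rw [e1, intervalIntegral.integral_comp_sub_right (fun x => x ^ r) u, sub_self,
      add_sub_cancel_left, key δ hδ]
  have h1 : (∫ v in (u - δ)..u, |v - u| ^ r) = δ ^ (r+1) / (r+1) := by
    have e1 : (∫ v in (u - δ)..u, |v - u| ^ r) = ∫ v in (u - δ)..u, (u - v) ^ r := by
      refine intervalIntegral.integral_congr (fun v hv => ?_)
      rw [uIcc_of_le (by linarith)] at hv
      rw [abs_sub_comm, abs_of_nonneg (by linarith [hv.2] : (0:ℝ) ≤ u - v)]
    rw [e1, intervalIntegral.integral_comp_sub_left (fun x => x ^ r) u, sub_self,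
      sub_sub_cancel, key δ hδ]
  rw [← intervalIntegral.integral_add_adjacent_intervals
      (intervalIntegrable_abs_rpow hr u _ _) (intervalIntegrable_abs_rpow hr u _ _),
    h1, h2]
  ring


lemma rpow_integrableOn_Ioo {r : ℝ} (hr : -1 < r) {A B : ℝ} (h : A ≤ B) :
    IntegrableOn (fun x : ℝ => x ^ r) (Ioo A B) volume := by
  rw [← intervalIntegrable_iff_integrableOn_Ioo_of_le h]
  exact intervalIntegral.intervalIntegrable_rpow' hr


lemma one_sub_rpow_integrableOn_Ioo {r : ℝ} (hr : -1 < r) {A : ℝ} (h : A ≤ 1) :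
    IntegrableOn (fun x : ℝ => (1 - x) ^ r) (Ioo A 1) volume := by
  have h1 : IntervalIntegrable (fun x : ℝ => (1 - x) ^ r) volume (1 - 0) (1 - (1 - A)) :=
    (intervalIntegral.intervalIntegrable_rpow' hr).comp_sub_left 1
  rw [sub_zero, sub_sub_cancel] at h1
  rw [← intervalIntegrable_iff_integrableOn_Ioo_of_le h]
  exact h1.symm


lemma beta_min_integrable {p q s : ℝ} (hs : 0 ≤ s) (hp : -1 < p + s) (hq : -1 < q + s) :
    IntegrableOn (fun x : ℝ => x ^ p * (1 - x) ^ q * (min x (1 - x)) ^ s)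
      (Ioo (0:ℝ) 1) volume := by
  have cover : Ioo (0:ℝ) 1 ⊆ Ioo 0 (2/3) ∪ Ioo (1/3) 1 := by
    intro x hx
    rcases lt_or_ge x (2/3) with h | h
    · exact Or.inl ⟨hx.1, h⟩
    · exact Or.inr ⟨by linarith, hx.2⟩
  refine IntegrableOn.mono_set (IntegrableOn.union ?_ ?_) cover
  · -- on Ioo 0 (2/3)
    refine Integrable.mono' (g := fun x => max 1 ((1/3:ℝ) ^ q) * x ^ (p + s))
      (((rpow_integrableOn_Ioo hp (by norm_num : (0:ℝ) ≤ 2/3)).const_mul _))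
      (by fun_prop : Measurable fun x : ℝ => x ^ p * (1 - x) ^ q * (min x (1 - x)) ^ s).aestronglyMeasurable
      ?_
    refine (ae_restrict_iff' measurableSet_Ioo).mpr (Filter.Eventually.of_forall fun x hx => ?_)
    have hx0 : (0:ℝ) < x := hx.1
    have hx1 : (1:ℝ)/3 < 1 - x := by linarith [hx.2]
    have hmin0 : (0:ℝ) ≤ min x (1 - x) := le_min hx0.le (by linarith)
    have h1 : (min x (1 - x)) ^ s ≤ x ^ s := rpow_le_rpow hmin0 (min_le_left _ _) hs
    have h2 : (1 - x) ^ q ≤ max 1 ((1/3:ℝ) ^ q) := by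
      rcases le_or_gt 0 q with hq0 | hq0
      · exact le_max_of_le_left (rpow_le_one (by linarith) (by linarith) hq0)
      · exact le_max_of_le_right (rpow_le_rpow_of_nonpos (by norm_num) hx1.le hq0.le)
    rw [Real.norm_eq_abs, abs_of_nonneg (by positivity)]
    calc x ^ p * (1 - x) ^ q * (min x (1 - x)) ^ s
        ≤ x ^ p * max 1 ((1/3:ℝ) ^ q) * x ^ s := by
          apply mul_le_mul (by
            apply mul_le_mul_of_nonneg_left h2 (by positivity)) h1 (by positivity) (by positivity)
      _ = max 1 ((1/3:ℝ) ^ q) * x ^ (p + s) := by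
          rw [rpow_add hx0]; ring
  · -- on Ioo (1/3) 1
    refine Integrable.mono' (g := fun x => max 1 ((1/3:ℝ) ^ p) * (1 - x) ^ (q + s))
      (((one_sub_rpow_integrableOn_Ioo hq (by norm_num : (1:ℝ)/3 ≤ 1)).const_mul _))
      (by fun_prop : Measurable fun x : ℝ => x ^ p * (1 - x) ^ q * (min x (1 - x)) ^ s).aestronglyMeasurable
      ?_
    refine (ae_restrict_iff' measurableSet_Ioo).mpr (Filter.Eventually.of_forall fun x hx => ?_)
    have hx0 : (1:ℝ)/3 < x := hx.1
    have hx1 : (0:ℝ) < 1 - x := by linarith [hx.2]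
    have hmin0 : (0:ℝ) ≤ min x (1 - x) := le_min (by linarith) hx1.le
    have h1 : (min x (1 - x)) ^ s ≤ (1 - x) ^ s := rpow_le_rpow hmin0 (min_le_right _ _) hs
    have h2 : x ^ p ≤ max 1 ((1/3:ℝ) ^ p) := by
      rcases le_or_gt 0 p with hp0 | hp0
      · exact le_max_of_le_left (rpow_le_one (by linarith) (by linarith [hx.2]) hp0)
      · exact le_max_of_le_right (rpow_le_rpow_of_nonpos (by norm_num) hx0.le hp0.le)
    rw [Real.norm_eq_abs, abs_of_nonneg (by positivity)]
    calc x ^ p * (1 - x) ^ q * (min x (1 - x)) ^ s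
        ≤ max 1 ((1/3:ℝ) ^ p) * (1 - x) ^ q * (1 - x) ^ s := by
          apply mul_le_mul (by
            apply mul_le_mul_of_nonneg_right h2 (by positivity)) h1 (by positivity) (by positivity)
      _ = max 1 ((1/3:ℝ) ^ p) * (1 - x) ^ (q + s) := by
          rw [rpow_add hx1]; ring


lemma beta_integrable {p q : ℝ} (hp : -1 < p) (hq : -1 < q) :
    IntegrableOn (fun x : ℝ => x ^ p * (1 - x) ^ q) (Ioo (0:ℝ) 1) volume := by
  have h := beta_min_integrable (le_refl (0:ℝ)) (by linarith : (-1:ℝ) < p + 0)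
    (by linarith : (-1:ℝ) < q + 0)
  refine h.congr_fun (fun x hx => ?_) measurableSet_Ioo
  dsimp only
  rw [rpow_zero, mul_one]


lemma prod_integrable {φ ψ : ℝ → ℝ} (hφ : IntegrableOn φ (Ioo (0:ℝ) 1) volume)
    (hψ : IntegrableOn ψ (Ioo (0:ℝ) 1) volume) :
    IntegrableOn (fun z : ℝ × ℝ => φ z.1 * ψ z.2)
      ((Ioo (0:ℝ) 1) ×ˢ (Ioo (0:ℝ) 1)) volume := by
  rw [IntegrableOn, Measure.volume_eq_prod, ← Measure.prod_restrict]
  exact Integrable.mul_prod hφ hψ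


set_option maxHeartbeats 1000000 in
lemma strip_integrable {p q r : ℝ} (hr : -1 < r) (hp : -1 < p + (r + 1)) (hq : -1 < q + (r + 1)) :
    IntegrableOn (fun z : ℝ × ℝ => z.1 ^ p * (1 - z.1) ^ q *
        (Ioo (z.1 - del z.1) (z.1 + del z.1)).indicator (fun v => |v - z.1| ^ r) z.2)
      ((Ioo (0:ℝ) 1) ×ˢ (Ioo (0:ℝ) 1)) volume := by
  have hr1 : (0:ℝ) < r + 1 := by linarith
  rw [IntegrableOn, Measure.volume_eq_prod, ← Measure.prod_restrict]
  set μ : Measure ℝ := volume.restrict (Ioo (0:ℝ) 1) with hμdef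
  -- measurability
  have hFmeas : Measurable (fun z : ℝ × ℝ => z.1 ^ p * (1 - z.1) ^ q *
      (Ioo (z.1 - del z.1) (z.1 + del z.1)).indicator (fun v => |v - z.1| ^ r) z.2) := by
    have heq : (fun z : ℝ × ℝ => (Ioo (z.1 - del z.1) (z.1 + del z.1)).indicator
        (fun v => |v - z.1| ^ r) z.2) = fun z : ℝ × ℝ =>
        if z.1 - del z.1 < z.2 ∧ z.2 < z.1 + del z.1 then |z.2 - z.1| ^ r else 0 := by
      funext z; simp [Set.indicator_apply, Set.mem_Ioo]
    have hdel : Measurable fun z : ℝ × ℝ => del z.1 := measurable_del.comp measurable_fst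
    have hset : MeasurableSet {z : ℝ × ℝ | z.1 - del z.1 < z.2 ∧ z.2 < z.1 + del z.1} := by
      have h1 : MeasurableSet {z : ℝ × ℝ | z.1 - del z.1 < z.2} :=
        measurableSet_lt (measurable_fst.sub hdel) measurable_snd
      have h2 : MeasurableSet {z : ℝ × ℝ | z.2 < z.1 + del z.1} :=
        measurableSet_lt measurable_snd (measurable_fst.add hdel)
      exact h1.inter h2
    have heq2 : (fun z : ℝ × ℝ => z.1 ^ p * (1 - z.1) ^ q *
        (Ioo (z.1 - del z.1) (z.1 + del z.1)).indicator (fun v => |v - z.1| ^ r) z.2) =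
        fun z : ℝ × ℝ => z.1 ^ p * (1 - z.1) ^ q *
        (if z.1 - del z.1 < z.2 ∧ z.2 < z.1 + del z.1 then |z.2 - z.1| ^ r else 0) := by
      funext z; rw [Set.indicator_apply]; simp [Set.mem_Ioo]
    rw [heq2]
    exact Measurable.mul (by fun_prop) (Measurable.ite hset (by fun_prop) measurable_const)
  have hFm : AEStronglyMeasurable (fun z : ℝ × ℝ => z.1 ^ p * (1 - z.1) ^ q *
      (Ioo (z.1 - del z.1) (z.1 + del z.1)).indicator (fun v => |v - z.1| ^ r) z.2) (μ.prod μ) :=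
    hFmeas.aestronglyMeasurable
  rw [integrable_prod_iff hFm]
  constructor
  · refine (ae_restrict_iff' measurableSet_Ioo).mpr (Filter.Eventually.of_forall fun u hu => ?_)
    simp only []
    have hδ0 : 0 < del u := by
      have h1 : 0 < min u (1 - u) := lt_min hu.1 (by linarith [hu.2])
      unfold del; positivity
    have hind : Integrable ((Ioo (u - del u) (u + del u)).indicator (fun v => |v - u| ^ r)) μ := by
      rw [integrable_indicator_iff measurableSet_Ioo]
      have h1 : IntegrableOn (fun v => |v - u| ^ r) (Ioo (u - del u) (u + del u)) volume := by
        rw [← intervalIntegrable_iff_integrableOn_Ioo_of_le (by linarith : u - del u ≤ u + del u)]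
        exact intervalIntegrable_abs_rpow hr u _ _
      have h2 : μ.restrict (Ioo (u - del u) (u + del u)) ≤
          volume.restrict (Ioo (u - del u) (u + del u)) := by
        rw [hμdef, Measure.restrict_restrict measurableSet_Ioo]
        exact Measure.restrict_mono inter_subset_left le_rfl
      exact MeasureTheory.Integrable.mono_measure h1 h2
    exact hind.const_mul _
  · -- integrability of the integral of norms
    have hG : Integrable (fun u : ℝ => (2 / (r+1) * (1/2:ℝ) ^ (r+1)) *
        (u ^ p * (1 - u) ^ q * (min u (1 - u)) ^ (r+1))) μ :=
      ((beta_min_integrable (le_of_lt hr1) hp hq).const_mul _)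
    refine Integrable.mono' hG (hFm.norm.integral_prod_right') ?_
    refine (ae_restrict_iff' measurableSet_Ioo).mpr (Filter.Eventually.of_forall fun u hu => ?_)
    simp only []
    have hu0 : (0:ℝ) < u := hu.1
    have hu1 : (0:ℝ) < 1 - u := by linarith [hu.2]
    have hδ0 : 0 < del u := by
      have := lt_min hu0 hu1
      unfold del; positivity
    have hcu : (0:ℝ) ≤ u ^ p * (1 - u) ^ q := by positivity
    -- pointwise rewrite of the norm
    have hnorm : ∀ v : ℝ, ‖u ^ p * (1 - u) ^ q *
        (Ioo (u - del u) (u + del u)).indicator (fun v => |v - u| ^ r) v‖ =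
        u ^ p * (1 - u) ^ q *
        (Ioo (u - del u) (u + del u)).indicator (fun v => |v - u| ^ r) v := by
      intro v
      rw [Real.norm_eq_abs, abs_of_nonneg]
      apply mul_nonneg hcu
      exact Set.indicator_nonneg (fun x _ => rpow_nonneg (abs_nonneg _) r) v
    have hindvol : Integrable ((Ioo (u - del u) (u + del u)).indicator
        (fun v => |v - u| ^ r)) volume := by
      rw [integrable_indicator_iff measurableSet_Ioo]
      rw [← intervalIntegrable_iff_integrableOn_Ioo_of_le (by linarith)]
      exact intervalIntegrable_abs_rpow hr u _ _
    have key : (∫ v, ‖u ^ p * (1 - u) ^ q *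
        (Ioo (u - del u) (u + del u)).indicator (fun v => |v - u| ^ r) v‖ ∂μ)
        ≤ u ^ p * (1 - u) ^ q * (2 * ((del u) ^ (r+1) / (r+1))) := by
      calc (∫ v, ‖u ^ p * (1 - u) ^ q *
            (Ioo (u - del u) (u + del u)).indicator (fun v => |v - u| ^ r) v‖ ∂μ)
          = ∫ v, u ^ p * (1 - u) ^ q *
            (Ioo (u - del u) (u + del u)).indicator (fun v => |v - u| ^ r) v ∂μ := by
            simp_rw [hnorm]
        _ = (u ^ p * (1 - u) ^ q) * ∫ v, (Ioo (u - del u) (u + del u)).indicator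
              (fun v => |v - u| ^ r) v ∂μ := by
            rw [integral_const_mul]
        _ ≤ (u ^ p * (1 - u) ^ q) * ∫ v, (Ioo (u - del u) (u + del u)).indicator
              (fun v => |v - u| ^ r) v ∂volume := by
            refine mul_le_mul_of_nonneg_left ?_ hcu
            refine integral_mono_measure Measure.restrict_le_self ?_ hindvol
            exact Filter.Eventually.of_forall
              (fun v => Set.indicator_nonneg (fun x _ => rpow_nonneg (abs_nonneg _) r) v)
        _ = (u ^ p * (1 - u) ^ q) * (2 * ((del u) ^ (r+1) / (r+1))) := by
            rw [integral_indicator measurableSet_Ioo, integral_abs_rpow hr u (del u) hδ0.le]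
    calc ‖∫ v, ‖u ^ p * (1 - u) ^ q *
          (Ioo (u - del u) (u + del u)).indicator (fun v => |v - u| ^ r) v‖ ∂μ‖
        = ∫ v, ‖u ^ p * (1 - u) ^ q *
          (Ioo (u - del u) (u + del u)).indicator (fun v => |v - u| ^ r) v‖ ∂μ := by
          rw [Real.norm_eq_abs, abs_of_nonneg (integral_nonneg (fun v => norm_nonneg _))]
      _ ≤ u ^ p * (1 - u) ^ q * (2 * ((del u) ^ (r+1) / (r+1))) := key
      _ = (2 / (r+1) * (1/2:ℝ) ^ (r+1)) * (u ^ p * (1 - u) ^ q * (min u (1 - u)) ^ (r+1)) := by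
          unfold del
          rw [div_rpow (le_min hu0.le hu1.le) (by norm_num : (0:ℝ) ≤ 2)]
          rw [div_eq_mul_inv (min u (1-u) ^ (r+1)), ← Real.rpow_neg (by norm_num : (0:ℝ) ≤ 2)]
          rw [show ((1:ℝ)/2) ^ (r+1) = 2 ^ (-(r+1)) by
            rw [Real.rpow_neg (by norm_num : (0:ℝ) ≤ 2), ← Real.inv_rpow (by norm_num : (0:ℝ) ≤ 2)]
            norm_num]
          ring


lemma rpow_comp_bound {x y t : ℝ} (hx : 0 < x) (hy : 0 < y) (h1 : x / 2 < y) (h2 : y < 2 * x) :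
    y ^ t ≤ 2 ^ |t| * x ^ t := by
  rcases le_or_gt 0 t with ht | ht
  · rw [abs_of_nonneg ht]
    calc y ^ t ≤ (2 * x) ^ t := rpow_le_rpow hy.le h2.le ht
      _ = 2 ^ t * x ^ t := mul_rpow (by norm_num) hx.le
  · rw [abs_of_neg ht]
    calc y ^ t ≤ (x / 2) ^ t := rpow_le_rpow_of_nonpos (by positivity) h1.le ht.le
      _ = x ^ t / 2 ^ t := div_rpow hx.le (by norm_num) t
      _ = 2 ^ (-t) * x ^ t := by
          rw [Real.rpow_neg (by norm_num : (0:ℝ) ≤ 2), div_eq_mul_inv, mul_comm]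


lemma aux_key {x y d c : ℝ} (hc : c ≤ 0) (hx : 0 < x) (hy : 0 < y)
    (hd : min x y / 2 ≤ d) (hxy : |x - y| ≤ d) :
    d ^ (2*c) ≤ (9:ℝ) ^ (-c) * (x ^ c * y ^ c) := by
  have hd0 : 0 < d := lt_of_lt_of_le (by positivity : (0:ℝ) < min x y / 2) hd
  have hx3 : x / 3 ≤ d := by
    rcases le_total x y with h | h
    · rw [min_eq_left h] at hd; linarith
    · rw [min_eq_right h] at hd
      rw [abs_of_nonneg (by linarith)] at hxy; linarith
  have hy3 : y / 3 ≤ d := by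
    rcases le_total y x with h | h
    · rw [min_eq_right h] at hd; linarith
    · rw [min_eq_left h] at hd
      rw [abs_of_nonpos (by linarith), neg_sub] at hxy; linarith
  have h1 : d ^ c ≤ (x/3) ^ c := rpow_le_rpow_of_nonpos (by positivity) hx3 hc
  have h2 : d ^ c ≤ (y/3) ^ c := rpow_le_rpow_of_nonpos (by positivity) hy3 hc
  have h3 : (3:ℝ) ^ c ≠ 0 := (rpow_pos_of_pos (by norm_num) c).ne'
  calc d ^ (2*c) = d ^ c * d ^ c := by rw [← rpow_add hd0]; ring_nf
    _ ≤ (x/3) ^ c * (y/3) ^ c :=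
        mul_le_mul h1 h2 (rpow_nonneg hd0.le c) (rpow_nonneg (by positivity) c)
    _ = (9:ℝ) ^ (-c) * (x ^ c * y ^ c) := by
        rw [div_rpow hx.le (by norm_num), div_rpow hy.le (by norm_num),
          Real.rpow_neg (by norm_num : (0:ℝ) ≤ 9), show (9:ℝ) = 3*3 by norm_num,
          Real.mul_rpow (by norm_num) (by norm_num)]
        field_simp


lemma pointwise_bound {a b c u v : ℝ} (hc : c ≤ 0)
    (hu : u ∈ Ioo (0:ℝ) 1) (hv : v ∈ Ioo (0:ℝ) 1) :
    u ^ (a-1) * v ^ (a-1) * (1-u) ^ (b-1) * (1-v) ^ (b-1) * |v - u| ^ (2*c) ≤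
      (9:ℝ) ^ (-c) * ((u ^ (a+c-1) * (1-u) ^ (b-1)) * (v ^ (a+c-1) * (1-v) ^ (b-1)))
      + (9:ℝ) ^ (-c) * ((u ^ (a-1) * (1-u) ^ (b+c-1)) * (v ^ (a-1) * (1-v) ^ (b+c-1)))
      + (2 ^ |a-1| * 2 ^ |b-1|) * (u ^ (2*a-2) * (1-u) ^ (2*b-2) *
          (Ioo (u - del u) (u + del u)).indicator (fun w => |w - u| ^ (2*c)) v) := by
  obtain ⟨hu0, hu1⟩ := hu
  obtain ⟨hv0, hv1⟩ := hv
  have h1u : (0:ℝ) < 1 - u := by linarith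
  have h1v : (0:ℝ) < 1 - v := by linarith
  have ht1 : 0 ≤ (9:ℝ) ^ (-c) * ((u ^ (a+c-1) * (1-u) ^ (b-1)) * (v ^ (a+c-1) * (1-v) ^ (b-1))) := by
    positivity
  have ht2 : 0 ≤ (9:ℝ) ^ (-c) * ((u ^ (a-1) * (1-u) ^ (b+c-1)) * (v ^ (a-1) * (1-v) ^ (b+c-1))) := by
    positivity
  have ht3 : 0 ≤ (2 ^ |a-1| * 2 ^ |b-1|) * (u ^ (2*a-2) * (1-u) ^ (2*b-2) *
      (Ioo (u - del u) (u + del u)).indicator (fun w => |w - u| ^ (2*c)) v) := by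
    apply mul_nonneg (by positivity)
    apply mul_nonneg (by positivity)
    exact Set.indicator_nonneg (fun w _ => rpow_nonneg (abs_nonneg _) _) v
  set d := |v - u| with hddef
  have hd0 : 0 ≤ d := abs_nonneg _
  have hvu1 : v - u ≤ d := le_abs_self _
  have hvu2 : -d ≤ v - u := neg_abs_le _
  set M := min (min u v) (min (1-u) (1-v)) with hMdef
  have hM0 : 0 < M := lt_min (lt_min hu0 hv0) (lt_min h1u h1v)
  have hMu : M ≤ u := le_trans (min_le_left _ _) (min_le_left _ _)
  have hMv : M ≤ v := le_trans (min_le_left _ _) (min_le_right _ _)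
  have hM1u : M ≤ 1 - u := le_trans (min_le_right _ _) (min_le_left _ _)
  have hM1v : M ≤ 1 - v := le_trans (min_le_right _ _) (min_le_right _ _)
  by_cases hstrip : d < M / 2
  · -- diagonal strip case
    have hddel : d < del u := by
      have : M ≤ min u (1-u) := le_min hMu hM1u
      unfold del; linarith
    have hvmem : v ∈ Ioo (u - del u) (u + del u) := by
      constructor <;> [linarith; linarith]
    have hcomp1 : v ^ (a-1) ≤ 2 ^ |a-1| * u ^ (a-1) :=
      rpow_comp_bound hu0 hv0 (by linarith) (by linarith)
    have hcomp2 : (1-v) ^ (b-1) ≤ 2 ^ |b-1| * (1-u) ^ (b-1) :=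
      rpow_comp_bound h1u h1v (by linarith) (by linarith)
    have key : u ^ (a-1) * v ^ (a-1) * (1-u) ^ (b-1) * (1-v) ^ (b-1) * d ^ (2*c) ≤
        (2 ^ |a-1| * 2 ^ |b-1|) * (u ^ (2*a-2) * (1-u) ^ (2*b-2) *
          (Ioo (u - del u) (u + del u)).indicator (fun w => |w - u| ^ (2*c)) v) := by
      rw [Set.indicator_of_mem hvmem]
      calc u ^ (a-1) * v ^ (a-1) * (1-u) ^ (b-1) * (1-v) ^ (b-1) * d ^ (2*c)
          ≤ u ^ (a-1) * (2 ^ |a-1| * u ^ (a-1)) * (1-u) ^ (b-1) *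
            (2 ^ |b-1| * (1-u) ^ (b-1)) * d ^ (2*c) := by
            gcongr <;> positivity
        _ = (2 ^ |a-1| * 2 ^ |b-1|) * (u ^ (2*a-2) * (1-u) ^ (2*b-2) * d ^ (2*c)) := by
            rw [show (2*a-2:ℝ) = (a-1)+(a-1) by ring, show (2*b-2:ℝ) = (b-1)+(b-1) by ring,
              rpow_add hu0, rpow_add h1u]
            ring
    linarith
  · push_neg at hstrip
    rcases le_total (min u v) (min (1-u) (1-v)) with hm | hm
    · have hMeq : M = min u v := min_eq_left hm
      have key0 : d ^ (2*c) ≤ (9:ℝ) ^ (-c) * (u ^ c * v ^ c) := by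
        refine aux_key hc hu0 hv0 (by rw [hMeq] at hstrip; linarith) ?_
        rw [abs_sub_comm]
      have key : u ^ (a-1) * v ^ (a-1) * (1-u) ^ (b-1) * (1-v) ^ (b-1) * d ^ (2*c) ≤
          (9:ℝ) ^ (-c) * ((u ^ (a+c-1) * (1-u) ^ (b-1)) * (v ^ (a+c-1) * (1-v) ^ (b-1))) := by
        calc u ^ (a-1) * v ^ (a-1) * (1-u) ^ (b-1) * (1-v) ^ (b-1) * d ^ (2*c)
            ≤ u ^ (a-1) * v ^ (a-1) * (1-u) ^ (b-1) * (1-v) ^ (b-1) *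
              ((9:ℝ) ^ (-c) * (u ^ c * v ^ c)) := by
              apply mul_le_mul_of_nonneg_left key0 (by positivity)
          _ = (9:ℝ) ^ (-c) * ((u ^ (a+c-1) * (1-u) ^ (b-1)) * (v ^ (a+c-1) * (1-v) ^ (b-1))) := by
              rw [show (a+c-1:ℝ) = (a-1)+c by ring, rpow_add hu0, rpow_add hv0]
              ring
      linarith
    · have hMeq : M = min (1-u) (1-v) := min_eq_right hm
      have key0 : d ^ (2*c) ≤ (9:ℝ) ^ (-c) * ((1-u) ^ c * (1-v) ^ c) := by
        refine aux_key hc h1u h1v (by rw [hMeq] at hstrip; linarith) ?_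
        rw [show (1-u) - (1-v) = v - u by ring]
      have key : u ^ (a-1) * v ^ (a-1) * (1-u) ^ (b-1) * (1-v) ^ (b-1) * d ^ (2*c) ≤
          (9:ℝ) ^ (-c) * ((u ^ (a-1) * (1-u) ^ (b+c-1)) * (v ^ (a-1) * (1-v) ^ (b+c-1))) := by
        calc u ^ (a-1) * v ^ (a-1) * (1-u) ^ (b-1) * (1-v) ^ (b-1) * d ^ (2*c)
            ≤ u ^ (a-1) * v ^ (a-1) * (1-u) ^ (b-1) * (1-v) ^ (b-1) *
              ((9:ℝ) ^ (-c) * ((1-u) ^ c * (1-v) ^ c)) := by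
              apply mul_le_mul_of_nonneg_left key0 (by positivity)
          _ = (9:ℝ) ^ (-c) * ((u ^ (a-1) * (1-u) ^ (b+c-1)) * (v ^ (a-1) * (1-v) ^ (b+c-1))) := by
              rw [show (b+c-1:ℝ) = (b-1)+c by ring, rpow_add h1u, rpow_add h1v]
              ring
      linarith


set_option maxHeartbeats 2000000 in
theorem stmt15 (a b c : ℝ) (ha : 0 < a) (hb : 0 < b)
    (hc : -min (1 / 2) (min a b) < c) :
    IntegrableOn (fun p : ℝ × ℝ =>
        p.1 ^ (a - 1) * p.2 ^ (a - 1) * (1 - p.1) ^ (b - 1) * (1 - p.2) ^ (b - 1) *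
          |p.2 - p.1| ^ (2 * c))
      ((Ioo (0 : ℝ) 1) ×ˢ (Ioo (0 : ℝ) 1)) volume := by
  have hca : -a < c := lt_of_le_of_lt (by
    have : min (1/2 : ℝ) (min a b) ≤ a := le_trans (min_le_right _ _) (min_le_left _ _)
    linarith) hc
  have hcb : -b < c := lt_of_le_of_lt (by
    have : min (1/2 : ℝ) (min a b) ≤ b := le_trans (min_le_right _ _) (min_le_right _ _)
    linarith) hc
  have hch : -(1/2 : ℝ) < c := lt_of_le_of_lt (by
    have : min (1/2 : ℝ) (min a b) ≤ 1/2 := min_le_left _ _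
    linarith) hc
  have hmeasF : Measurable (fun p : ℝ × ℝ =>
      p.1 ^ (a - 1) * p.2 ^ (a - 1) * (1 - p.1) ^ (b - 1) * (1 - p.2) ^ (b - 1) *
        |p.2 - p.1| ^ (2 * c)) := by fun_prop
  have hS : MeasurableSet ((Ioo (0:ℝ) 1) ×ˢ (Ioo (0:ℝ) 1)) :=
    measurableSet_Ioo.prod measurableSet_Ioo
  rcases le_or_gt c 0 with hc0 | hc0
  · -- c ≤ 0
    have I1 : IntegrableOn (fun z : ℝ × ℝ =>
        (z.1 ^ (a+c-1) * (1-z.1) ^ (b-1)) * (z.2 ^ (a+c-1) * (1-z.2) ^ (b-1)))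
        ((Ioo (0:ℝ) 1) ×ˢ (Ioo (0:ℝ) 1)) volume :=
      prod_integrable (φ := fun x => x ^ (a+c-1) * (1-x) ^ (b-1))
        (ψ := fun x => x ^ (a+c-1) * (1-x) ^ (b-1))
        (beta_integrable (by linarith) (by linarith))
        (beta_integrable (by linarith) (by linarith))
    have I2 : IntegrableOn (fun z : ℝ × ℝ =>
        (z.1 ^ (a-1) * (1-z.1) ^ (b+c-1)) * (z.2 ^ (a-1) * (1-z.2) ^ (b+c-1)))
        ((Ioo (0:ℝ) 1) ×ˢ (Ioo (0:ℝ) 1)) volume :=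
      prod_integrable (φ := fun x => x ^ (a-1) * (1-x) ^ (b+c-1))
        (ψ := fun x => x ^ (a-1) * (1-x) ^ (b+c-1))
        (beta_integrable (by linarith) (by linarith))
        (beta_integrable (by linarith) (by linarith))
    have I3 : IntegrableOn (fun z : ℝ × ℝ => z.1 ^ (2*a-2) * (1 - z.1) ^ (2*b-2) *
        (Ioo (z.1 - del z.1) (z.1 + del z.1)).indicator (fun v => |v - z.1| ^ (2*c)) z.2)
        ((Ioo (0:ℝ) 1) ×ˢ (Ioo (0:ℝ) 1)) volume :=
      strip_integrable (by linarith) (by linarith) (by linarith)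
    have Ig : Integrable (fun z : ℝ × ℝ =>
        (9:ℝ) ^ (-c) * ((z.1 ^ (a+c-1) * (1-z.1) ^ (b-1)) * (z.2 ^ (a+c-1) * (1-z.2) ^ (b-1)))
        + (9:ℝ) ^ (-c) * ((z.1 ^ (a-1) * (1-z.1) ^ (b+c-1)) * (z.2 ^ (a-1) * (1-z.2) ^ (b+c-1)))
        + (2 ^ |a-1| * 2 ^ |b-1|) * (z.1 ^ (2*a-2) * (1-z.1) ^ (2*b-2) *
            (Ioo (z.1 - del z.1) (z.1 + del z.1)).indicator (fun v => |v - z.1| ^ (2*c)) z.2))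
        (volume.restrict ((Ioo (0:ℝ) 1) ×ˢ (Ioo (0:ℝ) 1))) :=
      ((I1.const_mul _).add (I2.const_mul _)).add (I3.const_mul _)
    refine Integrable.mono' Ig hmeasF.aestronglyMeasurable ?_
    refine (ae_restrict_iff' hS).mpr (Filter.Eventually.of_forall fun z hz => ?_)
    obtain ⟨hz1, hz2⟩ := hz
    have hb1 : (0:ℝ) < 1 - z.1 := by linarith [hz1.2]
    have hb2 : (0:ℝ) < 1 - z.2 := by linarith [hz2.2]
    rw [Real.norm_eq_abs, abs_of_nonneg (by
      have := hz1.1; have := hz2.1; positivity)]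
    exact pointwise_bound hc0 hz1 hz2
  · -- 0 < c
    refine Integrable.mono'
      (prod_integrable (φ := fun x => x ^ (a-1) * (1-x) ^ (b-1))
        (ψ := fun x => x ^ (a-1) * (1-x) ^ (b-1))
        (beta_integrable (by linarith : (-1:ℝ) < a - 1) (by linarith : (-1:ℝ) < b - 1))
        (beta_integrable (by linarith : (-1:ℝ) < a - 1) (by linarith : (-1:ℝ) < b - 1)))
      hmeasF.aestronglyMeasurable ?_
    refine (ae_restrict_iff' hS).mpr (Filter.Eventually.of_forall fun z hz => ?_)
    obtain ⟨hz1, hz2⟩ := hz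
    have h10 : (0:ℝ) < z.1 := hz1.1
    have h20 : (0:ℝ) < z.2 := hz2.1
    have hb1 : (0:ℝ) < 1 - z.1 := by linarith [hz1.2]
    have hb2 : (0:ℝ) < 1 - z.2 := by linarith [hz2.2]
    have habs : |z.2 - z.1| ^ (2*c) ≤ 1 :=
      rpow_le_one (abs_nonneg _) (abs_le.mpr ⟨by linarith [hz2.1, hz1.2], by linarith [hz2.2, hz1.1]⟩)
        (by linarith)
    rw [Real.norm_eq_abs, abs_of_nonneg (by positivity)]
    calc z.1 ^ (a-1) * z.2 ^ (a-1) * (1-z.1) ^ (b-1) * (1-z.2) ^ (b-1) * |z.2 - z.1| ^ (2*c)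
        ≤ z.1 ^ (a-1) * z.2 ^ (a-1) * (1-z.1) ^ (b-1) * (1-z.2) ^ (b-1) * 1 := by
          apply mul_le_mul_of_nonneg_left habs (by positivity)
      _ = (z.1 ^ (a-1) * (1-z.1) ^ (b-1)) * (z.2 ^ (a-1) * (1-z.2) ^ (b-1)) := by ring
end
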